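/- arXiv:2303.09546 — 3 statements merged into one kernel-verified Lean document; each statement's English description precedes it below -/
import Mathlib

section
/- For any real numbers a, b with 0 < a < 1 and 0 < b < 1, the Bernoulli shift on ({0,1}^ℤ, μ_a^⊗ℤ), where μ_a is the measure on {0,1} with μ_a({1}) = a and μ_a({0}) = 1 − a, is quasi-similar to the Bernoulli shift on ({0,1}^ℤ, μ_b^⊗ℤ). (In particular, Bernoulli shifts of different Kolmogorov entropy can be quasi-similar, so entropy is not a quasi-similarity invariant.) -/
open MeasureTheory

noncomputable section

/-- `π` is the product measure over the index set `ι` of copies of `μ`: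
every cylinder set has the product measure. -/
def IsProductMeasure {ι α : Type*} [MeasurableSpace α] (π : Measure (ι → α))
    (μ : Measure α) : Prop :=
  ∀ (s : Finset ι) (C : ι → Set α), (∀ i, MeasurableSet (C i)) →
    π {x | ∀ i ∈ s, x i ∈ C i} = ∏ i ∈ s, μ (C i)

/-- The constant function `1` as an element of `L²(μ)`. -/
def one2 {X : Type*} [MeasurableSpace X] (μ : Measure X) [IsProbabilityMeasure μ] :
    Lp ℝ 2 μ :=
  indicatorConstLp 2 MeasurableSet.univ (measure_ne_top μ _) (1 : ℝ)

/-- The Koopman operator `U_T f = f ∘ T⁻¹` of an invertible measure-preserving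
transformation `T`, expressed via its (measure-preserving) inverse `Ti = T⁻¹`. -/
def koopman {X : Type*} [MeasurableSpace X] {μ : Measure X} {Ti : X → X}
    (hTi : MeasurePreserving Ti μ μ) : Lp ℝ 2 μ →L[ℝ] Lp ℝ 2 μ :=
  (Lp.compMeasurePreservingₗᵢ ℝ Ti hTi).toContinuousLinearMap

/-- `W` is a Markov quasi-similarity intertwining the Koopman operators `UT`, `US`:
it is a positive bounded operator with `W1 = 1`, `W*1 = 1`, injective, with dense
range, and `W ∘ UT = US ∘ W`. -/
structure IsMarkovQuasiSimilarity {X Y : Type*} [MeasurableSpace X] [MeasurableSpace Y]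
    {μ : Measure X} {ν : Measure Y} [IsProbabilityMeasure μ] [IsProbabilityMeasure ν]
    (UT : Lp ℝ 2 μ →L[ℝ] Lp ℝ 2 μ) (US : Lp ℝ 2 ν →L[ℝ] Lp ℝ 2 ν)
    (W : Lp ℝ 2 μ →L[ℝ] Lp ℝ 2 ν) : Prop where
  positive : ∀ f : Lp ℝ 2 μ, 0 ≤ f → 0 ≤ W f
  map_one : W (one2 μ) = one2 ν
  adjoint_one : ContinuousLinearMap.adjoint W (one2 ν) = one2 μ
  injective : Function.Injective W
  denseRange : DenseRange W
  intertwines : W.comp UT = US.comp W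

/-- The two-sided Bernoulli shift `(Sx)(n) = x(n+1)`. -/
def shiftZ {α : Type*} : (ℤ → α) → ℤ → α := fun x n => x (n + 1)

/-- The inverse of the Bernoulli shift. -/
def shiftZinv {α : Type*} : (ℤ → α) → ℤ → α := fun x n => x (n - 1)

/-- The Bernoulli measure `μ_a` on `{0,1}` (identified with `Bool`, `1 ↦ true`),
with `μ_a {1} = a` and `μ_a {0} = 1 - a`. -/
def bernMeasure (a : ℝ) : Measure Bool :=
  ENNReal.ofReal a • Measure.dirac true + ENNReal.ofReal (1 - a) • Measure.dirac false


set_option synthInstance.maxHeartbeats 1000000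
set_option maxHeartbeats 1000000

section Diag

variable {ι : Type*} (d : ι → ℝ) (hd : ∀ i, |d i| ≤ 1)
include hd

lemma diag_norm_le (f : lp (fun _ : ι => ℝ) 2) (i : ι) : ‖d i * f i‖ ≤ ‖f i‖ := by
  rw [norm_mul]
  calc ‖d i‖ * ‖f i‖ ≤ 1 * ‖f i‖ :=
    mul_le_mul_of_nonneg_right (by rw [Real.norm_eq_abs]; exact hd i) (norm_nonneg _)
  _ = ‖f i‖ := one_mul _

lemma diag_rpow_le (f : lp (fun _ : ι => ℝ) 2) (i : ι) :
    ‖d i * f i‖ ^ (2:ENNReal).toReal ≤ ‖f i‖ ^ (2:ENNReal).toReal :=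
  Real.rpow_le_rpow (norm_nonneg _) (diag_norm_le d hd f i) (by norm_num)

lemma diag_summable (f : lp (fun _ : ι => ℝ) 2) :
    Summable (fun i => ‖d i * f i‖ ^ (2:ENNReal).toReal) :=
  Summable.of_nonneg_of_le (fun i => Real.rpow_nonneg (norm_nonneg _) _)
    (diag_rpow_le d hd f)
    ((lp.memℓp f).summable (by norm_num))

lemma diagMemℓp (f : lp (fun _ : ι => ℝ) 2) : Memℓp (fun i => d i * f i) 2 :=
  memℓp_gen (diag_summable d hd f)

def diagOp : lp (fun _ : ι => ℝ) 2 →L[ℝ] lp (fun _ : ι => ℝ) 2 := by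
  refine LinearMap.mkContinuous
    { toFun := fun f => ⟨fun i => d i * f i, diagMemℓp d hd f⟩
      map_add' := fun f g => by
        ext i
        change d i * (f i + g i) = d i * f i + d i * g i
        ring
      map_smul' := fun c f => by
        ext i
        change d i * (c * f i) = c * (d i * f i)
        ring } 1 ?_
  intro f
  rw [one_mul]
  refine lp.norm_le_of_tsum_le (by norm_num) (norm_nonneg _) ?_
  calc ∑' i, ‖(⟨fun i => d i * f i, diagMemℓp d hd f⟩ : lp (fun _ : ι => ℝ) 2) i‖
        ^ (2:ENNReal).toReal
      ≤ ∑' i, ‖f i‖ ^ (2:ENNReal).toReal :=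
        Summable.tsum_le_tsum (diag_rpow_le d hd f) (diag_summable d hd f)
          ((lp.memℓp f).summable (by norm_num))
  _ = ‖f‖ ^ (2:ENNReal).toReal := (lp.norm_rpow_eq_tsum (by norm_num) f).symm

@[simp] lemma diagOp_apply (f : lp (fun _ : ι => ℝ) 2) (i : ι) :
    (diagOp d hd f : ∀ _ : ι, ℝ) i = d i * f i := rfl

end Diag

namespace BernQS
section Chunk1


/-! ### The elementary function `eF` -/

def eF (a : ℝ) : Bool → ℝ := fun u => if u then Real.sqrt ((1-a)/a) else -Real.sqrt (a/(1-a))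

variable {a b : ℝ}

lemma sqrt_mul_eF_true (ha0 : 0 < a) (ha1 : a < 1) :
    Real.sqrt (a * (1-a)) * eF a true = 1 - a := by
  have ha : a ≠ 0 := ne_of_gt ha0
  simp only [eF, if_true]
  rw [← Real.sqrt_mul (by nlinarith)]
  rw [show a * (1-a) * ((1-a)/a) = (1-a)^2 by field_simp]
  exact Real.sqrt_sq (by linarith)

lemma sqrt_mul_eF_false (ha0 : 0 < a) (ha1 : a < 1) :
    Real.sqrt (a * (1-a)) * eF a false = -a := by
  have ha : (1:ℝ) - a ≠ 0 := by linarith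
  simp only [eF, Bool.false_eq_true, if_false]
  rw [mul_neg, ← Real.sqrt_mul (by nlinarith)]
  rw [show a * (1-a) * (a/(1-a)) = a^2 by field_simp]
  rw [Real.sqrt_sq (by linarith)]

lemma sqrt_mul_eF (ha0 : 0 < a) (ha1 : a < 1) (u : Bool) :
    Real.sqrt (a * (1-a)) * eF a u = if u then 1 - a else -a := by
  cases u
  · simpa using sqrt_mul_eF_false ha0 ha1
  · simpa using sqrt_mul_eF_true ha0 ha1

lemma eF_avg (ha0 : 0 < a) (ha1 : a < 1) :
    a * eF a true + (1 - a) * eF a false = 0 := by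
  have h : 0 < Real.sqrt (a * (1-a)) := Real.sqrt_pos.2 (by nlinarith)
  have h1 := sqrt_mul_eF_true ha0 ha1
  have h2 := sqrt_mul_eF_false ha0 ha1
  have : Real.sqrt (a * (1-a)) * (a * eF a true + (1 - a) * eF a false) = 0 := by
    have := h1; nlinarith [h1, h2]
  rcases mul_eq_zero.1 this with h' | h'
  · exact absurd h' (ne_of_gt h)
  · exact h'

lemma eF_sq_avg (ha0 : 0 < a) (ha1 : a < 1) :
    a * (eF a true * eF a true) + (1 - a) * (eF a false * eF a false) = 1 := by
  have ha : a ≠ 0 := ne_of_gt ha0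
  have ha' : (1:ℝ) - a ≠ 0 := by linarith
  simp only [eF, Bool.false_eq_true, if_true, if_false]
  rw [neg_mul_neg, Real.mul_self_sqrt (div_nonneg (by linarith) (by linarith)),
    Real.mul_self_sqrt (div_nonneg (by linarith) (by linarith))]
  field_simp
  ring

/-! ### The correlation coefficient -/

def rho (a b : ℝ) : ℝ := Real.sqrt (a * (1-a)) * Real.sqrt (b * (1-b))

lemma rho_pos (ha0 : 0 < a) (ha1 : a < 1) (hb0 : 0 < b) (hb1 : b < 1) : 0 < rho a b :=
  mul_pos (Real.sqrt_pos.2 (by nlinarith)) (Real.sqrt_pos.2 (by nlinarith))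

lemma rho_le_one (ha0 : 0 < a) (ha1 : a < 1) (hb0 : 0 < b) (hb1 : b < 1) : rho a b ≤ 1 := by
  have h1 : Real.sqrt (a * (1-a)) ≤ 1 := Real.sqrt_le_one.mpr (by nlinarith)
  have h2 : Real.sqrt (b * (1-b)) ≤ 1 := Real.sqrt_le_one.mpr (by nlinarith)
  have h0 : 0 ≤ Real.sqrt (a * (1-a)) := Real.sqrt_nonneg _
  calc rho a b ≤ 1 * 1 := mul_le_mul h1 h2 (Real.sqrt_nonneg _) (by linarith)
  _ = 1 := by ring

lemma kernel_factor_nonneg (ha0 : 0 < a) (ha1 : a < 1) (hb0 : 0 < b) (hb1 : b < 1)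
    (u v : Bool) : 0 ≤ 1 + rho a b * (eF a u * eF b v) := by
  have : rho a b * (eF a u * eF b v)
      = (if u then 1 - a else -a) * (if v then 1 - b else -b) := by
    rw [← sqrt_mul_eF ha0 ha1 u, ← sqrt_mul_eF hb0 hb1 v, rho]; ring
  rw [this]
  cases u <;> cases v <;> simp <;> nlinarith


end Chunk1
section Chunk2

variable {a : ℝ}

lemma bernMeasure_singleton (u : Bool) :
    bernMeasure a {u} = if u then ENNReal.ofReal a else ENNReal.ofReal (1 - a) := by
  cases u <;> simp [bernMeasure, Measure.dirac_apply' _ (measurableSet_singleton _)]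

/-! ### Cylinder sets -/

def cylSet (S T : Finset ℤ) : Set (ℤ → Bool) := {x | ∀ i ∈ S, x i = decide (i ∈ T)}

lemma measurableSet_cylSet (S T : Finset ℤ) : MeasurableSet (cylSet S T) := by
  have : cylSet S T = ⋂ i ∈ S, (fun x : ℤ → Bool => x i) ⁻¹' {decide (i ∈ T)} := by
    ext x; simp [cylSet]
  rw [this]
  exact MeasurableSet.biInter (S.countable_toSet) fun i _ =>
    (measurable_pi_apply i) (measurableSet_singleton _)

variable {π : Measure (ℤ → Bool)} [IsProbabilityMeasure π]

lemma cylSet_measure (hπ : IsProductMeasure π (bernMeasure a)) (S T : Finset ℤ) :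
    π (cylSet S T) = ∏ i ∈ S, (if i ∈ T then ENNReal.ofReal a else ENNReal.ofReal (1 - a)) := by
  have h := hπ S (fun i => {decide (i ∈ T)}) (fun i => measurableSet_singleton _)
  have hs : {x : ℤ → Bool | ∀ i ∈ S, x i ∈ ({decide (i ∈ T)} : Set Bool)} = cylSet S T := by
    ext x; simp [cylSet]
  rw [hs] at h
  rw [h]
  refine Finset.prod_congr rfl fun i _ => ?_
  rw [bernMeasure_singleton]
  by_cases hi : i ∈ T <;> simp [hi]

lemma cylSet_measure_toReal (hπ : IsProductMeasure π (bernMeasure a))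
    (ha0 : 0 < a) (ha1 : a < 1) (S T : Finset ℤ) :
    (π (cylSet S T)).toReal = ∏ i ∈ S, (if i ∈ T then a else 1 - a) := by
  rw [cylSet_measure hπ, ENNReal.toReal_prod]
  refine Finset.prod_congr rfl fun i _ => ?_
  by_cases hi : i ∈ T <;>
    simp [hi, ENNReal.toReal_ofReal, ha0.le, (by linarith : (0:ℝ) ≤ 1 - a)]

/-! ### The master integral formula -/

open Classical in
lemma prod_eval_eq_sum_indicator (S : Finset ℤ) (g : ℤ → Bool → ℝ) (x : ℤ → Bool) :
    (∏ i ∈ S, g i (x i)) =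
      ∑ T ∈ S.powerset, Set.indicator (cylSet S T)
        (fun _ => ∏ i ∈ S, g i (decide (i ∈ T))) x := by
  set T₀ : Finset ℤ := S.filter (fun i => x i = true) with hT₀
  have hT₀mem : T₀ ∈ S.powerset := Finset.mem_powerset.2 (Finset.filter_subset _ _)
  have hdT₀ : ∀ i ∈ S, decide (i ∈ T₀) = x i := by
    intro i hi
    by_cases hx : x i = true
    · simp [hT₀, Finset.mem_filter, hi, hx]
    · have : x i = false := Bool.eq_false_iff.2 hx
      simp [hT₀, Finset.mem_filter, this]
  rw [Finset.sum_eq_single_of_mem T₀ hT₀mem]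
  · have hx0 : x ∈ cylSet S T₀ := fun i hi => (hdT₀ i hi).symm
    rw [Set.indicator_of_mem hx0]
    exact Finset.prod_congr rfl fun i hi => by rw [hdT₀ i hi]
  · intro T hT hne
    apply Set.indicator_of_notMem
    intro hx
    apply hne
    ext i
    constructor
    · intro hiT
      have hiS : i ∈ S := Finset.mem_powerset.1 hT hiT
      have := hx i hiS
      simp [hT₀, Finset.mem_filter, hiS, this, hiT]
    · intro hiT₀
      have hiS : i ∈ S := (Finset.mem_filter.1 hiT₀).1
      have hxi : x i = true := (Finset.mem_filter.1 hiT₀).2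
      have := hx i hiS
      rw [hxi] at this
      exact of_decide_eq_true this.symm

open Classical in
lemma integral_prod_eval (hπ : IsProductMeasure π (bernMeasure a))
    (ha0 : 0 < a) (ha1 : a < 1) (S : Finset ℤ) (g : ℤ → Bool → ℝ) :
    ∫ x, (∏ i ∈ S, g i (x i)) ∂π = ∏ i ∈ S, (a * g i true + (1 - a) * g i false) := by
  have hint : ∀ T ∈ S.powerset, Integrable
      (Set.indicator (cylSet S T) (fun _ => ∏ i ∈ S, g i (decide (i ∈ T)))) π := by
    intro T _
    exact (integrable_indicator_iff (measurableSet_cylSet S T)).2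
      (integrableOn_const (measure_ne_top π _))
  calc ∫ x, (∏ i ∈ S, g i (x i)) ∂π
      = ∫ x, (∑ T ∈ S.powerset, Set.indicator (cylSet S T)
          (fun _ => ∏ i ∈ S, g i (decide (i ∈ T))) x) ∂π := by
        congr 1; funext x; exact prod_eval_eq_sum_indicator S g x
    _ = ∑ T ∈ S.powerset, ∫ x, Set.indicator (cylSet S T)
          (fun _ => ∏ i ∈ S, g i (decide (i ∈ T))) x ∂π := integral_finset_sum _ hint
    _ = ∑ T ∈ S.powerset, (π (cylSet S T)).toReal • (∏ i ∈ S, g i (decide (i ∈ T))) := by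
        refine Finset.sum_congr rfl fun T _ => ?_
        rw [integral_indicator (measurableSet_cylSet S T), setIntegral_const]
        rfl
    _ = ∑ T ∈ S.powerset, ∏ i ∈ S,
          (if i ∈ T then a * g i true else (1 - a) * g i false) := by
        refine Finset.sum_congr rfl fun T hT => ?_
        rw [cylSet_measure_toReal hπ ha0 ha1, smul_eq_mul, ← Finset.prod_mul_distrib]
        refine Finset.prod_congr rfl fun i _ => ?_
        by_cases hi : i ∈ T <;> simp [hi]
    _ = ∏ i ∈ S, (a * g i true + (1 - a) * g i false) := by
        rw [Finset.prod_add]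
        refine Finset.sum_congr rfl fun T hT => ?_
        have hTS : T ⊆ S := Finset.mem_powerset.1 hT
        nth_rewrite 1 [← Finset.union_sdiff_of_subset hTS]
        rw [Finset.prod_union Finset.disjoint_sdiff]
        congr 1
        · exact Finset.prod_congr rfl fun i hi => by simp [hi]
        · exact Finset.prod_congr rfl fun i hi => by simp [(Finset.mem_sdiff.1 hi).2]


end Chunk2
section Chunk3

/-! ### Walsh functions -/

def walsh (a : ℝ) (S : Finset ℤ) : (ℤ → Bool) → ℝ := fun x => ∏ i ∈ S, eF a (x i)

variable {a : ℝ} {π : Measure (ℤ → Bool)} [IsProbabilityMeasure π]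

lemma walsh_measurable (a : ℝ) (S : Finset ℤ) : Measurable (walsh a S) :=
  Finset.measurable_prod S fun i _ =>
    (Measurable.of_discrete (f := eF a)).comp (measurable_pi_apply i)

def eBound (a : ℝ) : ℝ := max (Real.sqrt ((1-a)/a)) (Real.sqrt (a/(1-a)))

lemma abs_eF_le (a : ℝ) (u : Bool) : |eF a u| ≤ eBound a := by
  cases u
  · rw [show eF a false = -Real.sqrt (a/(1-a)) from rfl, abs_neg,
      abs_of_nonneg (Real.sqrt_nonneg _)]
    exact le_max_right _ _
  · rw [show eF a true = Real.sqrt ((1-a)/a) from rfl,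
      abs_of_nonneg (Real.sqrt_nonneg _)]
    exact le_max_left _ _

lemma memLp_walsh (S : Finset ℤ) : MemLp (walsh a S) 2 π := by
  refine MemLp.mono_exponent (q := ⊤) ?_ le_top
  refine memLp_top_of_bound (walsh_measurable a S).aestronglyMeasurable ((eBound a)^S.card) ?_
  refine Filter.Eventually.of_forall fun x => ?_
  rw [walsh, Real.norm_eq_abs, Finset.abs_prod]
  calc ∏ i ∈ S, |eF a (x i)| ≤ ∏ i ∈ S, eBound a :=
        Finset.prod_le_prod (fun i _ => abs_nonneg _) (fun i _ => abs_eF_le a (x i))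
  _ = (eBound a)^S.card := Finset.prod_const _

def walshLp (S : Finset ℤ) (π : Measure (ℤ → Bool)) [IsProbabilityMeasure π] (a : ℝ) :
    Lp ℝ 2 π := (memLp_walsh (a := a) (π := π) S).toLp (walsh a S)

lemma walshLp_coeFn (S : Finset ℤ) : walshLp S π a =ᵐ[π] walsh a S :=
  MemLp.coeFn_toLp _

lemma walsh_mul_walsh (S T : Finset ℤ) (x : ℤ → Bool) :
    walsh a S x * walsh a T x =
      ∏ i ∈ S ∪ T, ((if i ∈ S then eF a (x i) else 1) * (if i ∈ T then eF a (x i) else 1)) := by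
  rw [Finset.prod_mul_distrib]
  congr 1
  · calc walsh a S x = ∏ i ∈ S, (if i ∈ S then eF a (x i) else 1) :=
          Finset.prod_congr rfl fun i hi => (if_pos hi).symm
      _ = ∏ i ∈ S ∪ T, (if i ∈ S then eF a (x i) else 1) :=
          Finset.prod_subset Finset.subset_union_left (fun i _ hi => if_neg hi)
  · calc walsh a T x = ∏ i ∈ T, (if i ∈ T then eF a (x i) else 1) :=
          Finset.prod_congr rfl fun i hi => (if_pos hi).symm
      _ = ∏ i ∈ S ∪ T, (if i ∈ T then eF a (x i) else 1) :=
          Finset.prod_subset Finset.subset_union_right (fun i _ hi => if_neg hi)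

lemma integral_walsh_mul_walsh (hπ : IsProductMeasure π (bernMeasure a))
    (ha0 : 0 < a) (ha1 : a < 1) (S T : Finset ℤ) :
    ∫ x, walsh a S x * walsh a T x ∂π = if S = T then 1 else 0 := by
  have h := integral_prod_eval hπ ha0 ha1 (S ∪ T)
      (fun i u => (if i ∈ S then eF a u else 1) * (if i ∈ T then eF a u else 1))
  rw [show (∫ x, walsh a S x * walsh a T x ∂π)
      = ∫ x, (∏ i ∈ S ∪ T, ((if i ∈ S then eF a (x i) else 1) *
          (if i ∈ T then eF a (x i) else 1))) ∂π by
    exact integral_congr_ae (Filter.Eventually.of_forall fun x => walsh_mul_walsh S T x), h]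
  by_cases hST : S = T
  · subst hST
    rw [if_pos rfl]
    refine Finset.prod_eq_one fun i hi => ?_
    rw [Finset.union_idempotent] at hi
    simp only [if_pos hi]
    exact eF_sq_avg ha0 ha1
  · rw [if_neg hST]
    have : ∃ i ∈ S ∪ T, ¬(i ∈ S ↔ i ∈ T) := by
      by_contra hc
      push_neg at hc
      exact hST (Finset.ext fun i => by
        by_cases hi : i ∈ S ∪ T
        · exact hc i hi
        · rw [Finset.mem_union] at hi; push_neg at hi
          constructor <;> intro h' <;> [exact absurd h' hi.1; exact absurd h' hi.2])
    obtain ⟨i, hiU, hi⟩ := this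
    refine Finset.prod_eq_zero hiU ?_
    rcases Finset.mem_union.1 hiU with hiS | hiT
    · have hiT : i ∉ T := fun h => hi ⟨fun _ => h, fun _ => hiS⟩
      simp only [if_pos hiS, if_neg hiT, mul_one]
      exact eF_avg ha0 ha1
    · have hiS : i ∉ S := fun h => hi ⟨fun _ => hiT, fun _ => h⟩
      simp only [if_pos hiT, if_neg hiS, one_mul]
      exact eF_avg ha0 ha1

lemma inner_walshLp (hπ : IsProductMeasure π (bernMeasure a))
    (ha0 : 0 < a) (ha1 : a < 1) (S T : Finset ℤ) :
    (inner ℝ (walshLp S π a) (walshLp T π a) : ℝ) = if S = T then 1 else 0 := by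
  rw [L2.inner_def]
  have h : (fun x => (inner ℝ (walshLp S π a x) (walshLp T π a x) : ℝ))
      =ᵐ[π] fun x => walsh a S x * walsh a T x := by
    filter_upwards [walshLp_coeFn (a := a) (π := π) S, walshLp_coeFn (a := a) (π := π) T]
      with x h1 h2
    rw [RCLike.inner_apply, conj_trivial, h1, h2, mul_comm]
  rw [integral_congr_ae h, integral_walsh_mul_walsh hπ ha0 ha1 S T]

lemma orthonormal_walshLp (hπ : IsProductMeasure π (bernMeasure a))
    (ha0 : 0 < a) (ha1 : a < 1) :
    Orthonormal ℝ (fun S => walshLp S π a) := by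
  rw [orthonormal_iff_ite]
  intro S T
  rw [inner_walshLp hπ ha0 ha1]


end Chunk3
section Chunk4

variable {a : ℝ} {π : Measure (ℤ → Bool)} [IsProbabilityMeasure π]

lemma abs_walsh_le (a : ℝ) (S : Finset ℤ) (x : ℤ → Bool) :
    |walsh a S x| ≤ (eBound a)^S.card := by
  rw [walsh, Finset.abs_prod]
  calc ∏ i ∈ S, |eF a (x i)| ≤ ∏ i ∈ S, eBound a :=
        Finset.prod_le_prod (fun i _ => abs_nonneg _) (fun i _ => abs_eF_le a (x i))
  _ = (eBound a)^S.card := Finset.prod_const _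

/-- Any function on `Bool` is an affine combination of `1` and `eF a`. -/
lemma exists_affine_eF (ha0 : 0 < a) (ha1 : a < 1) (h : Bool → ℝ) :
    ∃ α β : ℝ, ∀ u, h u = α + β * eF a u := by
  have hpos : 0 < eF a true - eF a false := by
    have h1 : 0 < Real.sqrt ((1-a)/a) := Real.sqrt_pos.2 (div_pos (by linarith) ha0)
    have h2 : 0 < Real.sqrt (a/(1-a)) := Real.sqrt_pos.2 (by
      apply div_pos ha0; linarith)
    show 0 < Real.sqrt ((1-a)/a) - -Real.sqrt (a/(1-a))
    linarith
  refine ⟨h true - (h true - h false)/(eF a true - eF a false) * eF a true,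
    (h true - h false)/(eF a true - eF a false), fun u => ?_⟩
  have hne : eF a true - eF a false ≠ 0 := ne_of_gt hpos
  cases u
  · field_simp
    ring
  · ring

section withG
variable (hπ : IsProductMeasure π (bernMeasure a)) (ha0 : 0 < a) (ha1 : a < 1)
  (g : (ℤ → Bool) → ℝ) (hgi : Integrable g π)
  (hwg : ∀ T : Finset ℤ, ∫ x, walsh a T x * g x ∂π = 0)
include hπ ha0 ha1 hgi hwg

/-- Integrals of `g` against arbitrary finite products of coordinate functions vanish. -/
lemma integral_prod_mul_g_eq_zero (S : Finset ℤ) (h : ℤ → Bool → ℝ) :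
    ∫ x, (∏ i ∈ S, h i (x i)) * g x ∂π = 0 := by
  classical
  choose α β hαβ using fun i => exists_affine_eF ha0 ha1 (h i)
  have hexp : ∀ x : ℤ → Bool, (∏ i ∈ S, h i (x i))
      = ∑ T ∈ S.powerset, ((∏ i ∈ T, β i) * (∏ i ∈ S \ T, α i)) * walsh a T x := by
    intro x
    calc ∏ i ∈ S, h i (x i) = ∏ i ∈ S, (β i * eF a (x i) + α i) := by
          refine Finset.prod_congr rfl fun i _ => ?_
          rw [hαβ i (x i)]; ring
    _ = ∑ T ∈ S.powerset, (∏ i ∈ T, β i * eF a (x i)) * (∏ i ∈ S \ T, α i) :=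
          Finset.prod_add _ _ S
    _ = ∑ T ∈ S.powerset, ((∏ i ∈ T, β i) * (∏ i ∈ S \ T, α i)) * walsh a T x := by
          refine Finset.sum_congr rfl fun T _ => ?_
          rw [Finset.prod_mul_distrib, walsh]; ring
  have hint : ∀ T ∈ S.powerset, Integrable
      (fun x => (((∏ i ∈ T, β i) * (∏ i ∈ S \ T, α i)) * walsh a T x) * g x) π := by
    intro T _
    apply hgi.bdd_mul (c := |(∏ i ∈ T, β i) * (∏ i ∈ S \ T, α i)| * (eBound a)^T.card)
    · exact (((walsh_measurable a T).const_mul _).aestronglyMeasurable)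
    · refine Filter.Eventually.of_forall fun x => ?_
      rw [norm_mul, Real.norm_eq_abs, Real.norm_eq_abs]
      exact mul_le_mul_of_nonneg_left (abs_walsh_le a T x) (abs_nonneg _)
  calc ∫ x, (∏ i ∈ S, h i (x i)) * g x ∂π
      = ∫ x, ∑ T ∈ S.powerset,
          (((∏ i ∈ T, β i) * (∏ i ∈ S \ T, α i)) * walsh a T x) * g x ∂π := by
        congr 1; funext x; rw [hexp x, Finset.sum_mul]
    _ = ∑ T ∈ S.powerset, ∫ x,
          (((∏ i ∈ T, β i) * (∏ i ∈ S \ T, α i)) * walsh a T x) * g x ∂π :=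
        integral_finset_sum _ hint
    _ = 0 := by
        refine Finset.sum_eq_zero fun T _ => ?_
        have : ∀ x, (((∏ i ∈ T, β i) * (∏ i ∈ S \ T, α i)) * walsh a T x) * g x
            = ((∏ i ∈ T, β i) * (∏ i ∈ S \ T, α i)) * (walsh a T x * g x) := by
          intro x; ring
        simp only [this]
        rw [integral_const_mul, hwg T, mul_zero]

/-- Integrals of `g` over product cylinders vanish. -/
lemma setIntegral_cyl_g_eq_zero (S : Finset ℤ) (C : ℤ → Set Bool) :
    ∫ x in {x : ℤ → Bool | ∀ i ∈ S, x i ∈ C i}, g x ∂π = 0 := by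
  classical
  have hmeas : MeasurableSet {x : ℤ → Bool | ∀ i ∈ S, x i ∈ C i} := by
    have : {x : ℤ → Bool | ∀ i ∈ S, x i ∈ C i}
        = ⋂ i ∈ S, (fun x : ℤ → Bool => x i) ⁻¹' (C i) := by
      ext x; simp
    rw [this]
    exact MeasurableSet.biInter (S.countable_toSet) fun i _ =>
      (measurable_pi_apply i) (MeasurableSet.of_discrete)
  have hind : ∀ x : ℤ → Bool, Set.indicator {x : ℤ → Bool | ∀ i ∈ S, x i ∈ C i}
      (fun _ => (1:ℝ)) x = ∏ i ∈ S, (if x i ∈ C i then (1:ℝ) else 0) := by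
    intro x
    by_cases hx : x ∈ {x : ℤ → Bool | ∀ i ∈ S, x i ∈ C i}
    · rw [Set.indicator_of_mem hx]
      exact (Finset.prod_eq_one fun i hi => if_pos (hx i hi)).symm
    · rw [Set.indicator_of_notMem hx]
      rw [Set.mem_setOf_eq] at hx
      push_neg at hx
      obtain ⟨i, hiS, hiC⟩ := hx
      exact (Finset.prod_eq_zero hiS
        (if_neg hiC : (if x i ∈ C i then (1:ℝ) else 0) = 0)).symm
  rw [← integral_indicator hmeas]
  have : ∀ x : ℤ → Bool, Set.indicator {x : ℤ → Bool | ∀ i ∈ S, x i ∈ C i} g x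
      = (∏ i ∈ S, (if x i ∈ C i then (1:ℝ) else 0)) * g x := by
    intro x
    rw [← hind x]
    by_cases hx : x ∈ {x : ℤ → Bool | ∀ i ∈ S, x i ∈ C i}
    · rw [Set.indicator_of_mem hx, Set.indicator_of_mem hx, one_mul]
    · rw [Set.indicator_of_notMem hx, Set.indicator_of_notMem hx, zero_mul]
  rw [show ∫ x, Set.indicator {x : ℤ → Bool | ∀ i ∈ S, x i ∈ C i} g x ∂π
      = ∫ x, (∏ i ∈ S, (if x i ∈ C i then (1:ℝ) else 0)) * g x ∂π by
    congr 1; funext x; exact this x]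
  exact integral_prod_mul_g_eq_zero hπ ha0 ha1 g hgi hwg S (fun i u => if u ∈ C i then 1 else 0)

/-- Integrals of `g` over all measurable sets vanish. -/
lemma setIntegral_g_eq_zero : ∀ A : Set (ℤ → Bool), MeasurableSet A →
    ∫ x in A, g x ∂π = 0 := by
  have hgen : (inferInstance : MeasurableSpace (ℤ → Bool))
      = MeasurableSpace.generateFrom (measurableCylinders (fun _ : ℤ => Bool)) :=
    generateFrom_measurableCylinders.symm
  have huniv : ∫ x, g x ∂π = 0 := by
    have := hwg ∅
    simpa [walsh] using this
  refine MeasurableSpace.induction_on_inter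
      (C := fun A _ => ∫ x in A, g x ∂π = 0) hgen isPiSystem_measurableCylinders
      (by simp) ?basic ?compl ?iUnion
  case basic =>
    intro t ht
    rw [mem_measurableCylinders] at ht
    obtain ⟨s, St, _, rfl⟩ := ht
    classical
    have hdecomp : cylinder s St = ⋃ c ∈ St.toFinset, cylinder (α := fun _ : ℤ => Bool) s {c} := by
      ext x
      simp only [mem_cylinder, Set.mem_iUnion, Set.mem_singleton_iff, Set.mem_toFinset]
      constructor
      · intro hx; exact ⟨s.restrict x, hx, rfl⟩
      · rintro ⟨c, hc, rfl⟩; exact hc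
    rw [hdecomp]
    rw [integral_biUnion_finset St.toFinset
      (fun c _ => ((MeasurableSet.of_discrete (s := {c})).cylinder))
      (fun c _ c' _ hcc' => by
        simp only [Function.onFun, Set.disjoint_left]
        intro x hx hx'
        rw [mem_cylinder, Set.mem_singleton_iff] at hx hx'
        exact hcc' (hx.symm.trans hx'))
      (fun c _ => hgi.integrableOn)]
    refine Finset.sum_eq_zero fun c _ => ?_
    have hset : cylinder (α := fun _ : ℤ => Bool) s {c}
        = {x : ℤ → Bool | ∀ i ∈ s, x i ∈ {u | ∀ h : i ∈ s, u = c ⟨i, h⟩}} := by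
      ext x
      simp only [mem_cylinder, Set.mem_singleton_iff, Set.mem_setOf_eq]
      constructor
      · intro hx i hi h
        exact congrFun hx ⟨i, h⟩
      · intro hx
        funext i
        exact hx i.1 i.2 i.2
    rw [hset]
    exact setIntegral_cyl_g_eq_zero hπ ha0 ha1 g hgi hwg s _
  case compl =>
    intro t htm iht
    rw [setIntegral_compl htm hgi, iht, huniv, sub_zero]
  case iUnion =>
    intro f hdisj hfm ihf
    rw [integral_iUnion hfm hdisj hgi.integrableOn]
    simp [ihf]

end withG

end Chunk4
section Chunk6



variable {a b : ℝ} {π : Measure (ℤ → Bool)} [IsProbabilityMeasure π]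

/-! ### Density of the span of Walsh functions -/

lemma inner_walshLp_eq_integral (S : Finset ℤ) (g : Lp ℝ 2 π) :
    (inner ℝ (walshLp S π a) g : ℝ) = ∫ x, walsh a S x * g x ∂π := by
  rw [L2.inner_def]
  refine integral_congr_ae ?_
  filter_upwards [walshLp_coeFn (a := a) (π := π) S] with x h1
  rw [RCLike.inner_apply, conj_trivial, h1, mul_comm]

lemma integrable_of_L2 (g : Lp ℝ 2 π) : Integrable (g : (ℤ → Bool) → ℝ) π :=
  memLp_one_iff_integrable.1 ((Lp.memLp g).mono_exponent (by norm_num))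

lemma orthogonal_span_walshLp_eq_bot (hπ : IsProductMeasure π (bernMeasure a))
    (ha0 : 0 < a) (ha1 : a < 1) :
    (Submodule.span ℝ (Set.range (fun S => walshLp S π a)))ᗮ = ⊥ := by
  rw [Submodule.eq_bot_iff]
  intro g hg
  have hg' : ∀ S : Finset ℤ, (inner ℝ (walshLp S π a) g : ℝ) = 0 := fun S =>
    (Submodule.mem_orthogonal _ g).1 hg _ (Submodule.subset_span ⟨S, rfl⟩)
  have hgi : Integrable (g : (ℤ → Bool) → ℝ) π := integrable_of_L2 g
  have hwg : ∀ T : Finset ℤ, ∫ x, walsh a T x * (g : (ℤ → Bool) → ℝ) x ∂π = 0 := by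
    intro T
    rw [← inner_walshLp_eq_integral]
    exact hg' T
  have hzero : (g : (ℤ → Bool) → ℝ) =ᵐ[π] 0 :=
    hgi.ae_eq_zero_of_forall_setIntegral_eq_zero
      (fun s hs _ => setIntegral_g_eq_zero hπ ha0 ha1 _ hgi hwg s hs)
  exact Lp.ext (hzero.trans (Lp.coeFn_zero ℝ 2 π).symm)

def walshBasis (hπ : IsProductMeasure π (bernMeasure a)) (ha0 : 0 < a) (ha1 : a < 1) :
    HilbertBasis (Finset ℤ) ℝ (Lp ℝ 2 π) :=
  HilbertBasis.mkOfOrthogonalEqBot (orthonormal_walshLp hπ ha0 ha1)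
    (orthogonal_span_walshLp_eq_bot hπ ha0 ha1)

lemma walshBasis_apply (hπ : IsProductMeasure π (bernMeasure a)) (ha0 : 0 < a) (ha1 : a < 1)
    (S : Finset ℤ) : walshBasis hπ ha0 ha1 S = walshLp S π a :=
  congrFun (HilbertBasis.coe_mkOfOrthogonalEqBot _ _) S

/-! ### `one2` and the Koopman action on Walsh functions -/

lemma one2_eq_walshLp : one2 π = walshLp ∅ π a := by
  refine Lp.ext ?_
  have h1 : one2 π =ᵐ[π] Set.indicator Set.univ (fun _ => (1:ℝ)) := indicatorConstLp_coeFn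
  have h2 : walshLp ∅ π a =ᵐ[π] walsh a ∅ := walshLp_coeFn ∅
  filter_upwards [h1, h2] with x e1 e2
  rw [e1, e2]
  simp [walsh]

lemma walsh_shiftZinv (S : Finset ℤ) (x : ℤ → Bool) :
    walsh a S (shiftZinv x) = walsh a (S.image (fun i => i - 1)) x := by
  rw [walsh, walsh, Finset.prod_image (fun i _ j _ h => by omega)]
  rfl

lemma koopman_walshLp {Ti : (ℤ → Bool) → (ℤ → Bool)} (hTi : MeasurePreserving Ti π π)
    (hsh : Ti = shiftZinv) (S : Finset ℤ) :
    koopman hTi (walshLp S π a) = walshLp (S.image (fun i => i - 1)) π a := by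
  refine Lp.ext ?_
  have h1 : koopman hTi (walshLp S π a) =ᵐ[π] (walshLp S π a : (ℤ → Bool) → ℝ) ∘ Ti :=
    Lp.coeFn_compMeasurePreserving _ _
  have h2 : ((walshLp S π a : (ℤ → Bool) → ℝ) ∘ Ti) =ᵐ[π] (walsh a S ∘ Ti) :=
    hTi.quasiMeasurePreserving.ae_eq_comp (walshLp_coeFn S)
  have h3 : (walsh a S ∘ Ti) = walsh a (S.image (fun i => i - 1)) := by
    funext x
    rw [Function.comp_apply, hsh, walsh_shiftZinv]
  refine (h1.trans (h2.trans ?_)).trans (walshLp_coeFn _).symm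
  rw [h3]

/-! ### coeFn of finite sums -/

lemma coeFn_sum_smul_walshLp (s : Finset (Finset ℤ)) (c : Finset ℤ → ℝ) :
    ((∑ S ∈ s, c S • walshLp S π a : Lp ℝ 2 π) : (ℤ → Bool) → ℝ)
      =ᵐ[π] fun y => ∑ S ∈ s, c S * walsh a S y := by
  classical
  induction s using Finset.induction_on with
  | empty => simp; exact Lp.coeFn_zero ℝ 2 π
  | @insert S s hS ih =>
    rw [Finset.sum_insert hS]
    have h1 := Lp.coeFn_add (c S • walshLp S π a) (∑ T ∈ s, c T • walshLp T π a)
    have h2 := Lp.coeFn_smul (c S) (walshLp S π a)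
    have h3 := walshLp_coeFn (a := a) (π := π) S
    filter_upwards [h1, h2, h3, ih] with y e1 e2 e3 e4
    rw [e1]
    simp only [Pi.add_apply]
    rw [e2]
    simp only [Pi.smul_apply, smul_eq_mul]
    rw [e3, e4, Finset.sum_insert hS]

/-! ### The kernel identity -/

lemma kernel_sum (I : Finset ℤ) (x y : ℤ → Bool) :
    ∑ S ∈ I.powerset, (rho a b ^ S.card) * (walsh a S x * walsh b S y)
      = ∏ i ∈ I, (1 + rho a b * (eF a (x i) * eF b (y i))) := by
  have h : ∀ i ∈ I, (1 + rho a b * (eF a (x i) * eF b (y i)))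
      = rho a b * (eF a (x i) * eF b (y i)) + 1 := fun i _ => add_comm _ _
  rw [Finset.prod_congr rfl h, Finset.prod_add]
  refine Finset.sum_congr rfl fun S _ => ?_
  rw [Finset.prod_const_one, mul_one, walsh, walsh, Finset.prod_mul_distrib,
    Finset.prod_mul_distrib, Finset.prod_const]

/-! ### The Markov operator -/

section Main

variable {πa πb : Measure (ℤ → Bool)} [IsProbabilityMeasure πa] [IsProbabilityMeasure πb]
variable (ha0 : 0 < a) (ha1 : a < 1) (hb0 : 0 < b) (hb1 : b < 1)
variable (hπa : IsProductMeasure πa (bernMeasure a)) (hπb : IsProductMeasure πb (bernMeasure b))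

def dCoef (a b : ℝ) : Finset ℤ → ℝ := fun S => rho a b ^ S.card

lemma abs_dCoef_le_one (ha0 : 0 < a) (ha1 : a < 1) (hb0 : 0 < b) (hb1 : b < 1) :
    ∀ S : Finset ℤ, |dCoef a b S| ≤ 1 := fun S => by
  rw [dCoef, abs_of_nonneg (pow_nonneg (rho_pos ha0 ha1 hb0 hb1).le _)]
  exact pow_le_one₀ (rho_pos ha0 ha1 hb0 hb1).le (rho_le_one ha0 ha1 hb0 hb1)

lemma dCoef_ne_zero (ha0 : 0 < a) (ha1 : a < 1) (hb0 : 0 < b) (hb1 : b < 1)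
    (S : Finset ℤ) : dCoef a b S ≠ 0 :=
  pow_ne_zero _ (ne_of_gt (rho_pos ha0 ha1 hb0 hb1))

def WOp : Lp ℝ 2 πa →L[ℝ] Lp ℝ 2 πb :=
  ((((walshBasis hπb hb0 hb1).repr.symm.toContinuousLinearEquiv) : _ →L[ℝ] _)).comp
    ((diagOp (dCoef a b) (abs_dCoef_le_one ha0 ha1 hb0 hb1)).comp
      (((walshBasis hπa ha0 ha1).repr.toContinuousLinearEquiv) : _ →L[ℝ] _))

lemma WOp_apply (f : Lp ℝ 2 πa) :
    WOp ha0 ha1 hb0 hb1 hπa hπb f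
      = (walshBasis hπb hb0 hb1).repr.symm
          (diagOp (dCoef a b) (abs_dCoef_le_one ha0 ha1 hb0 hb1)
            ((walshBasis hπa ha0 ha1).repr f)) := rfl

lemma repr_WOp (f : Lp ℝ 2 πa) :
    (walshBasis hπb hb0 hb1).repr (WOp ha0 ha1 hb0 hb1 hπa hπb f)
      = diagOp (dCoef a b) (abs_dCoef_le_one ha0 ha1 hb0 hb1)
          ((walshBasis hπa ha0 ha1).repr f) := by
  rw [WOp_apply]
  exact (walshBasis hπb hb0 hb1).repr.apply_symm_apply _

lemma diagOp_single (S : Finset ℤ) :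
    diagOp (dCoef a b) (abs_dCoef_le_one ha0 ha1 hb0 hb1) (lp.single 2 S (1:ℝ))
      = dCoef a b S • lp.single 2 S (1:ℝ) := by
  classical
  apply lp.ext
  funext T
  rw [diagOp_apply]
  have hs := lp.coeFn_smul (E := fun _ : Finset ℤ => ℝ) (dCoef a b S) (lp.single 2 S (1:ℝ))
  rw [congrFun hs T]
  simp only [Pi.smul_apply, smul_eq_mul]
  by_cases hT : T = S
  · subst hT
    rw [lp.single_apply_self]
  · rw [lp.single_apply_ne 2 S _ hT, mul_zero, mul_zero]

lemma WOp_basis (S : Finset ℤ) :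
    WOp ha0 ha1 hb0 hb1 hπa hπb (walshBasis hπa ha0 ha1 S)
      = dCoef a b S • walshBasis hπb hb0 hb1 S := by
  classical
  rw [WOp_apply, (walshBasis hπa ha0 ha1).repr_self,
    diagOp_single ha0 ha1 hb0 hb1, LinearIsometryEquiv.map_smul]
  exact congrArg (fun x => dCoef a b S • x) ((walshBasis hπb hb0 hb1).repr_symm_single S)

lemma WOp_injective : Function.Injective (WOp ha0 ha1 hb0 hb1 hπa hπb) := by
  intro f g h
  have h2 : diagOp (dCoef a b) (abs_dCoef_le_one ha0 ha1 hb0 hb1)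
        ((walshBasis hπa ha0 ha1).repr f)
      = diagOp (dCoef a b) (abs_dCoef_le_one ha0 ha1 hb0 hb1)
        ((walshBasis hπa ha0 ha1).repr g) := by
    rw [← repr_WOp ha0 ha1 hb0 hb1 hπa hπb f, ← repr_WOp ha0 ha1 hb0 hb1 hπa hπb g, h]
  have h3 : (walshBasis hπa ha0 ha1).repr f = (walshBasis hπa ha0 ha1).repr g := by
    apply lp.ext
    funext S
    rw [lp.ext_iff] at h2
    have := congrFun h2 S
    rw [diagOp_apply, diagOp_apply] at this
    exact mul_left_cancel₀ (dCoef_ne_zero ha0 ha1 hb0 hb1 S) this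
  exact (walshBasis hπa ha0 ha1).repr.injective h3

lemma WOp_denseRange : DenseRange (WOp ha0 ha1 hb0 hb1 hπa hπb) := by
  have hbasis_mem : ∀ S : Finset ℤ, walshBasis hπb hb0 hb1 S
      ∈ Set.range (WOp ha0 ha1 hb0 hb1 hπa hπb) := by
    intro S
    refine ⟨(dCoef a b S)⁻¹ • walshBasis hπa ha0 ha1 S, ?_⟩
    rw [ContinuousLinearMap.map_smul, WOp_basis, smul_smul,
      inv_mul_cancel₀ (dCoef_ne_zero ha0 ha1 hb0 hb1 S), one_smul]
  have hdense : Dense ((Submodule.span ℝ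
      (Set.range (walshBasis hπb hb0 hb1))) : Set (Lp ℝ 2 πb)) :=
    Submodule.dense_iff_topologicalClosure_eq_top.2 (walshBasis hπb hb0 hb1).dense_span
  refine hdense.mono ?_
  intro x hx
  induction hx using Submodule.span_induction with
  | mem x h => obtain ⟨S, rfl⟩ := h; exact hbasis_mem S
  | zero => exact ⟨0, map_zero _⟩
  | add x y _ _ hx hy =>
    obtain ⟨u, rfl⟩ := hx; obtain ⟨v, rfl⟩ := hy; exact ⟨u + v, map_add _ _ _⟩
  | smul c x _ hx =>
    obtain ⟨u, rfl⟩ := hx; exact ⟨c • u, ContinuousLinearMap.map_smul _ _ _⟩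

lemma WOp_one : WOp ha0 ha1 hb0 hb1 hπa hπb (one2 πa) = one2 πb := by
  rw [one2_eq_walshLp (a := a) (π := πa), ← walshBasis_apply hπa ha0 ha1, WOp_basis]
  rw [show dCoef a b ∅ = 1 by simp [dCoef], one_smul, walshBasis_apply hπb hb0 hb1,
    ← one2_eq_walshLp (a := b) (π := πb)]

lemma WOp_adjoint_one :
    ContinuousLinearMap.adjoint (WOp ha0 ha1 hb0 hb1 hπa hπb) (one2 πb) = one2 πa := by
  refine ext_inner_right ℝ fun f => ?_
  rw [ContinuousLinearMap.adjoint_inner_left]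
  rw [one2_eq_walshLp (a := a) (π := πa), one2_eq_walshLp (a := b) (π := πb),
    ← walshBasis_apply hπa ha0 ha1, ← walshBasis_apply hπb hb0 hb1]
  rw [← (walshBasis hπb hb0 hb1).repr_apply_apply, ← (walshBasis hπa ha0 ha1).repr_apply_apply]
  rw [repr_WOp, diagOp_apply]
  rw [show dCoef a b ∅ = 1 by simp [dCoef], one_mul]

lemma WOp_intertwines {Ta Tb : (ℤ → Bool) → (ℤ → Bool)}
    (hTa : MeasurePreserving Ta πa πa) (hTb : MeasurePreserving Tb πb πb)
    (hsa : Ta = shiftZinv) (hsb : Tb = shiftZinv) :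
    (WOp ha0 ha1 hb0 hb1 hπa hπb).comp (koopman hTa)
      = (koopman hTb).comp (WOp ha0 ha1 hb0 hb1 hπa hπb) := by
  have hdense : Dense ((Submodule.span ℝ
      (Set.range (walshBasis hπa ha0 ha1))) : Set (Lp ℝ 2 πa)) :=
    Submodule.dense_iff_topologicalClosure_eq_top.2 (walshBasis hπa ha0 ha1).dense_span
  refine ContinuousLinearMap.ext_on hdense ?_
  rintro _ ⟨S, rfl⟩
  have hcard : (S.image (fun i => i - 1)).card = S.card :=
    Finset.card_image_of_injective S (fun i j h => by omega)
  rw [ContinuousLinearMap.comp_apply, ContinuousLinearMap.comp_apply]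
  rw [walshBasis_apply hπa ha0 ha1, koopman_walshLp hTa hsa,
    ← walshBasis_apply hπa ha0 ha1 (S.image (fun i => i - 1)), WOp_basis,
    ← walshBasis_apply hπa ha0 ha1 S, WOp_basis, ContinuousLinearMap.map_smul]
  rw [walshBasis_apply hπb hb0 hb1, walshBasis_apply hπb hb0 hb1, koopman_walshLp hTb hsb]
  rw [show dCoef a b (S.image (fun i => i - 1)) = dCoef a b S by rw [dCoef, dCoef, hcard]]

/-! ### Positivity -/

lemma repr_walshBasis_eq_integral (f : Lp ℝ 2 πa) (S : Finset ℤ) :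
    (walshBasis hπa ha0 ha1).repr f S = ∫ x, walsh a S x * f x ∂πa := by
  rw [HilbertBasis.repr_apply_apply, walshBasis_apply hπa ha0 ha1,
    inner_walshLp_eq_integral]

include hb0 hb1 hπb in
lemma sum_nonneg_aux (f : Lp ℝ 2 πa) (hf : 0 ≤ f) (I : Finset ℤ) :
    0 ≤ ∑ S ∈ I.powerset,
      ((walshBasis hπa ha0 ha1).repr f S * dCoef a b S) • walshLp S πb b := by
  classical
  set c : Finset ℤ → ℝ := fun S => (walshBasis hπa ha0 ha1).repr f S * dCoef a b S with hc
  have hcoe := coeFn_sum_smul_walshLp (π := πb) (a := b) I.powerset c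
  have hfae : 0 ≤ᵐ[πa] (f : (ℤ → Bool) → ℝ) := (Lp.coeFn_nonneg f).2 hf
  have hfi : Integrable (f : (ℤ → Bool) → ℝ) πa := integrable_of_L2 f
  have hpt : ∀ y : ℤ → Bool, 0 ≤ ∑ S ∈ I.powerset, c S * walsh b S y := by
    intro y
    have hterm : ∀ S ∈ I.powerset, c S * walsh b S y
        = ∫ x, (dCoef a b S * walsh b S y) * (walsh a S x * f x) ∂πa := by
      intro S _
      rw [hc]
      simp only
      rw [repr_walshBasis_eq_integral ha0 ha1 hπa f S, mul_assoc, mul_comm,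
        ← integral_const_mul]
    rw [Finset.sum_congr rfl hterm]
    have hint : ∀ S ∈ I.powerset, Integrable
        (fun x => (dCoef a b S * walsh b S y) * (walsh a S x * f x)) πa := by
      intro S _
      have h1 : Integrable (fun x => walsh a S x * f x) πa :=
        hfi.bdd_mul (c := (eBound a)^S.card) (walsh_measurable a S).aestronglyMeasurable
          (Filter.Eventually.of_forall fun x => by
            rw [Real.norm_eq_abs]; exact abs_walsh_le a S x)
      exact h1.const_mul _
    rw [← integral_finset_sum _ hint]
    refine integral_nonneg_of_ae ?_
    filter_upwards [hfae] with x hx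
    have hker : ∑ S ∈ I.powerset, (dCoef a b S * walsh b S y) * (walsh a S x * f x)
        = (∏ i ∈ I, (1 + rho a b * (eF a (x i) * eF b (y i)))) * f x := by
      rw [← kernel_sum, Finset.sum_mul]
      refine Finset.sum_congr rfl fun S _ => ?_
      rw [show dCoef a b S = rho a b ^ S.card from rfl]
      ring
    rw [hker]
    exact mul_nonneg (Finset.prod_nonneg fun i _ =>
      kernel_factor_nonneg ha0 ha1 hb0 hb1 (x i) (y i)) hx
  rw [← Lp.coeFn_nonneg]
  filter_upwards [hcoe] with y hy
  rw [Pi.zero_apply, hy]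
  exact hpt y

lemma WOp_positive (f : Lp ℝ 2 πa) (hf : 0 ≤ f) :
    0 ≤ WOp ha0 ha1 hb0 hb1 hπa hπb f := by
  classical
  have hmono : Monotone (fun n : ℕ => (Finset.Icc (-(n:ℤ)) (n:ℤ)).powerset) := by
    intro m n h
    have hmn : (m:ℤ) ≤ (n:ℤ) := by exact_mod_cast h
    exact Finset.powerset_mono.2 (Finset.Icc_subset_Icc (by omega) (by omega))
  have hexh : ∀ S : Finset ℤ, ∃ n : ℕ, S ∈ (Finset.Icc (-(n:ℤ)) (n:ℤ)).powerset := by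
    intro S
    refine ⟨S.sup (fun i => i.natAbs), Finset.mem_powerset.2 fun i hi => ?_⟩
    have h1 : i.natAbs ≤ S.sup (fun i => i.natAbs) := Finset.le_sup hi
    rw [Finset.mem_Icc]
    omega
  have htendF : Filter.Tendsto (fun n : ℕ => (Finset.Icc (-(n:ℤ)) (n:ℤ)).powerset)
      Filter.atTop Filter.atTop :=
    Filter.tendsto_atTop_finset_of_monotone hmono hexh
  have hsum := (walshBasis hπa ha0 ha1).hasSum_repr f
  have htend2 : Filter.Tendsto
      (fun n : ℕ => ∑ S ∈ (Finset.Icc (-(n:ℤ)) (n:ℤ)).powerset,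
        (walshBasis hπa ha0 ha1).repr f S • walshBasis hπa ha0 ha1 S)
      Filter.atTop (nhds f) := hsum.comp htendF
  have htend3 := ((WOp ha0 ha1 hb0 hb1 hπa hπb).continuous.tendsto f).comp htend2
  have heq : ∀ n : ℕ, WOp ha0 ha1 hb0 hb1 hπa hπb
        (∑ S ∈ (Finset.Icc (-(n:ℤ)) (n:ℤ)).powerset,
          (walshBasis hπa ha0 ha1).repr f S • walshBasis hπa ha0 ha1 S)
      = ∑ S ∈ (Finset.Icc (-(n:ℤ)) (n:ℤ)).powerset,
          ((walshBasis hπa ha0 ha1).repr f S * dCoef a b S) • walshLp S πb b := by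
    intro n
    rw [map_sum]
    refine Finset.sum_congr rfl fun S _ => ?_
    rw [ContinuousLinearMap.map_smul, WOp_basis, smul_smul, walshBasis_apply hπb hb0 hb1]
  have hmem : ∀ᶠ n : ℕ in Filter.atTop,
      (WOp ha0 ha1 hb0 hb1 hπa hπb ∘ fun n : ℕ =>
        ∑ S ∈ (Finset.Icc (-(n:ℤ)) (n:ℤ)).powerset,
          (walshBasis hπa ha0 ha1).repr f S • walshBasis hπa ha0 ha1 S) n
        ∈ {x : Lp ℝ 2 πb | 0 ≤ x} := by
    refine Filter.Eventually.of_forall fun n => ?_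
    show (0:Lp ℝ 2 πb) ≤ _
    rw [Function.comp_apply, heq n]
    exact sum_nonneg_aux ha0 ha1 hb0 hb1 hπa hπb f hf _
  exact isClosed_nonneg.mem_of_tendsto htend3 hmem

end Main

end Chunk6
end BernQS

/-- For any `0 < a < 1` and `0 < b < 1`, the Bernoulli shift on
`({0,1}^ℤ, μ_a^⊗ℤ)` is quasi-similar to the Bernoulli shift on `({0,1}^ℤ, μ_b^⊗ℤ)`. -/
theorem bernoulli_shifts_quasiSimilar (a b : ℝ)
    (ha0 : 0 < a) (ha1 : a < 1) (hb0 : 0 < b) (hb1 : b < 1)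
    (πa πb : Measure (ℤ → Bool)) [IsProbabilityMeasure πa] [IsProbabilityMeasure πb]
    (hπa : IsProductMeasure πa (bernMeasure a)) (hπb : IsProductMeasure πb (bernMeasure b))
    (hSa : MeasurePreserving (shiftZ (α := Bool)) πa πa)
    (hSainv : MeasurePreserving (shiftZinv (α := Bool)) πa πa)
    (hSb : MeasurePreserving (shiftZ (α := Bool)) πb πb)
    (hSbinv : MeasurePreserving (shiftZinv (α := Bool)) πb πb) :
    ∃ W : Lp ℝ 2 πa →L[ℝ] Lp ℝ 2 πb,
      IsMarkovQuasiSimilarity (koopman hSainv) (koopman hSbinv) W := by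
  refine ⟨BernQS.WOp ha0 ha1 hb0 hb1 hπa hπb,
    fun f hf => BernQS.WOp_positive ha0 ha1 hb0 hb1 hπa hπb f hf,
    BernQS.WOp_one ha0 ha1 hb0 hb1 hπa hπb,
    BernQS.WOp_adjoint_one ha0 ha1 hb0 hb1 hπa hπb,
    BernQS.WOp_injective ha0 ha1 hb0 hb1 hπa hπb,
    BernQS.WOp_denseRange ha0 ha1 hb0 hb1 hπa hπb,
    BernQS.WOp_intertwines ha0 ha1 hb0 hb1 hπa hπb hSainv hSbinv rfl rfl⟩
end
end

section
/- Fix 0 < a < 1/2. Let μ be Lebesgue measure on [0,1], let S : [0,1]^ℤ → [0,1]^ℤ be the left shift preserving μ^⊗ℤ, let 𝒜 be the sub-σ-algebra of the product σ-algebra generated by the sets {x : x_n ∈ [0,a]}, n ∈ ℤ, and let ℬ be the sub-σ-algebra generated by the sets {x : x_n ∈ [0,1/2]}, n ∈ ℤ. Then the operator W : L²(𝒜) → L²(ℬ), given by restricting the conditional expectation onto ℬ to the 𝒜-measurable functions in L²(μ^⊗ℤ), is injective. -/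
open MeasureTheory
open scoped symmDiff

noncomputable section

/-- Lebesgue measure on `[0,1]`. -/
def μ01 : Measure ℝ := volume.restrict (Set.Icc 0 1)

/-- The sub-σ-algebra of the product σ-algebra on `[0,1]^ℤ` generated by the sets
`{x : x n ∈ [0,c]}`, `n ∈ ℤ`. -/
def coordAlg (c : ℝ) : MeasurableSpace (ℤ → ℝ) :=
  MeasurableSpace.generateFrom {s | ∃ n : ℤ, s = {x : ℤ → ℝ | x n ∈ Set.Icc 0 c}}

/-- The operator `W : L²(mA) → L²(mB)` obtained by restricting the conditional
expectation (orthogonal projection) onto `L²(mB)` to the subspace `L²(mA)`. -/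
def condexpW {X : Type*} (mA mB : MeasurableSpace X) [m0 : MeasurableSpace X]
    (π : Measure X) (hB : mB ≤ m0) :
    lpMeas ℝ ℝ mA 2 π →L[ℝ] lpMeas ℝ ℝ mB 2 π :=
  (condExpL2 ℝ ℝ hB).comp (Submodule.subtypeL (lpMeas ℝ ℝ mA 2 π))

namespace ShiftCondexpAux

open MeasurableSpace

lemma setIntegral_eq_on_subalg {X : Type*} {m : MeasurableSpace X} [m0 : MeasurableSpace X]
    {π : Measure X}
    [IsFiniteMeasure π] {P : Set (Set X)} (hPi : IsPiSystem P) (hPuniv : Set.univ ∈ P)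
    (h_eq : m = MeasurableSpace.generateFrom P) (hm : m ≤ m0)
    {f g : X → ℝ} (hf : Integrable f π) (hg : Integrable g π)
    (h : ∀ s ∈ P, ∫ x in s, f x ∂π = ∫ x in s, g x ∂π) :
    ∀ s : Set X, MeasurableSet[m] s → ∫ x in s, f x ∂π = ∫ x in s, g x ∂π := by
  have huniv : ∫ x, f x ∂π = ∫ x, g x ∂π := by
    have h2 := h _ hPuniv
    rwa [setIntegral_univ, setIntegral_univ] at h2
  let C : Set X → Prop := fun s => ∫ x in s, f x ∂π = ∫ x in s, g x ∂π
  intro s hs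
  refine @MeasurableSpace.induction_on_inter X m (fun s _ => C s) P h_eq hPi ?_ h ?_ ?_ s hs
  · show ∫ x in (∅ : Set X), f x ∂π = ∫ x in (∅ : Set X), g x ∂π
    simp
  · intro t htm hCt
    have hCt' : ∫ x in t, f x ∂π = ∫ x in t, g x ∂π := hCt
    have ht0 : MeasurableSet t := hm t htm
    have hf' := integral_add_compl ht0 hf
    have hg' := integral_add_compl ht0 hg
    show ∫ x in tᶜ, f x ∂π = ∫ x in tᶜ, g x ∂π
    linarith
  · intro F hdisj hFm hC
    have hFm0 : ∀ i, MeasurableSet (F i) := fun i => hm _ (hFm i)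
    show ∫ x in ⋃ i, F i, f x ∂π = ∫ x in ⋃ i, F i, g x ∂π
    rw [integral_iUnion hFm0 hdisj hf.integrableOn,
      integral_iUnion hFm0 hdisj hg.integrableOn]
    exact tsum_congr fun i => hC i

lemma setIntegral_indicator_one {X : Type*} [MeasurableSpace X] {π : Measure X}
    {s t : Set X} (ht : MeasurableSet t) :
    ∫ x in s, t.indicator (fun _ => (1 : ℝ)) x ∂π = (π (t ∩ s)).toReal := by
  rw [setIntegral_indicator ht, setIntegral_const, smul_eq_mul, mul_one, Set.inter_comm, measureReal_def]

def AS (c : ℝ) (T : Finset ℤ) : Set (ℤ → ℝ) := {x | ∀ n ∈ T, x n ∈ Set.Icc 0 c}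

lemma AS_empty (c : ℝ) : AS c ∅ = Set.univ := by ext x; simp [AS]

lemma AS_inter (c : ℝ) (T₁ T₂ : Finset ℤ) : AS c T₁ ∩ AS c T₂ = AS c (T₁ ∪ T₂) := by
  ext x
  simp only [AS, Set.mem_inter_iff, Set.mem_setOf_eq, Finset.mem_union]
  constructor
  · rintro ⟨h1, h2⟩ n hn
    rcases hn with h | h
    exacts [h1 n h, h2 n h]
  · intro h
    exact ⟨fun n hn => h n (Or.inl hn), fun n hn => h n (Or.inr hn)⟩

lemma measurableSet_AS (c : ℝ) (T : Finset ℤ) : MeasurableSet[coordAlg c] (AS c T) := by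
  have h : AS c T = ⋂ n ∈ (T : Set ℤ), {x : ℤ → ℝ | x n ∈ Set.Icc 0 c} := by
    ext x; simp [AS]
  rw [h]
  exact MeasurableSet.biInter T.countable_toSet
    (fun n _ => measurableSet_generateFrom ⟨n, rfl⟩)

lemma measurableSet_AS' (c : ℝ) (T : Finset ℤ) : MeasurableSet (AS c T) := by
  have h : AS c T = ⋂ n ∈ (T : Set ℤ), (fun x : ℤ → ℝ => x n) ⁻¹' Set.Icc 0 c := by
    ext x; simp [AS]
  rw [h]
  exact MeasurableSet.biInter T.countable_toSet
    (fun n _ => (measurable_pi_apply n) measurableSet_Icc)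

lemma coordAlg_eq (c : ℝ) :
    coordAlg c = generateFrom {s : Set (ℤ → ℝ) | ∃ T : Finset ℤ, s = AS c T} := by
  rw [coordAlg]
  refine le_antisymm (generateFrom_le ?_) (generateFrom_le ?_)
  · rintro s ⟨n, rfl⟩
    exact measurableSet_generateFrom ⟨{n}, by ext x; simp [AS]⟩
  · rintro s ⟨T, rfl⟩
    exact measurableSet_AS c T

lemma isPiSystem_AS (c : ℝ) :
    IsPiSystem {s : Set (ℤ → ℝ) | ∃ T : Finset ℤ, s = AS c T} := by
  rintro s ⟨T₁, rfl⟩ t ⟨T₂, rfl⟩ -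
  exact ⟨T₁ ∪ T₂, AS_inter c T₁ T₂⟩

lemma μ01_Icc {c : ℝ} (h0 : 0 ≤ c) (h1 : c ≤ 1) :
    μ01 (Set.Icc 0 c) = ENNReal.ofReal c := by
  rw [μ01, Measure.restrict_apply measurableSet_Icc, Set.Icc_inter_Icc]
  simp [min_eq_left h1, Real.volume_Icc]

lemma measure_AS_inter {a : ℝ} (ha0 : 0 ≤ a) (ha1 : a ≤ 1 / 2) {π : Measure (ℤ → ℝ)}
    (hπ : IsProductMeasure π μ01) (T S : Finset ℤ) :
    π (AS a T ∩ AS (1 / 2) S)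
      = ENNReal.ofReal (a ^ T.card * (1 / 2 : ℝ) ^ (S \ T).card) := by
  classical
  set c : ℤ → ℝ := fun i => if i ∈ T then a else 1 / 2 with hc
  have hset : AS a T ∩ AS (1 / 2) S = {x | ∀ i ∈ T ∪ S, x i ∈ Set.Icc 0 (c i)} := by
    ext x
    simp only [AS, Set.mem_inter_iff, Set.mem_setOf_eq, Finset.mem_union, hc]
    constructor
    · rintro ⟨h1, h2⟩ i hi
      by_cases hiT : i ∈ T
      · rw [if_pos hiT]; exact h1 i hiT
      · rw [if_neg hiT]; exact h2 i (hi.resolve_left hiT)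
    · intro h
      refine ⟨fun n hn => ?_, fun n hn => ?_⟩
      · have := h n (Or.inl hn); rwa [if_pos hn] at this
      · have := h n (Or.inr hn)
        by_cases hnT : n ∈ T
        · rw [if_pos hnT] at this
          exact ⟨this.1, this.2.trans ha1⟩
        · rwa [if_neg hnT] at this
  rw [hset, hπ (T ∪ S) (fun i => Set.Icc 0 (c i)) (fun i => measurableSet_Icc)]
  have hTS : T ∪ S = T ∪ (S \ T) := Finset.union_sdiff_self_eq_union.symm
  rw [hTS, Finset.prod_union Finset.disjoint_sdiff]
  have h1 : ∀ i ∈ T, μ01 (Set.Icc 0 (c i)) = ENNReal.ofReal a := by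
    intro i hi
    rw [hc]; simp only []; rw [if_pos hi]
    exact μ01_Icc ha0 (by linarith)
  have h2 : ∀ i ∈ S \ T, μ01 (Set.Icc 0 (c i)) = ENNReal.ofReal (1 / 2) := by
    intro i hi
    have hiT : i ∉ T := (Finset.mem_sdiff.mp hi).2
    rw [hc]; simp only []; rw [if_neg hiT]
    exact μ01_Icc (by norm_num) (by norm_num)
  rw [Finset.prod_congr rfl h1, Finset.prod_congr rfl h2, Finset.prod_const,
    Finset.prod_const, ← ENNReal.ofReal_pow ha0, ← ENNReal.ofReal_pow (by norm_num),
    ← ENNReal.ofReal_mul (by positivity)]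

lemma measure_AS {a : ℝ} (ha0 : 0 ≤ a) (ha1 : a ≤ 1 / 2) {π : Measure (ℤ → ℝ)}
    (hπ : IsProductMeasure π μ01) (T : Finset ℤ) :
    π (AS a T) = ENNReal.ofReal (a ^ T.card) := by
  have h := measure_AS_inter ha0 ha1 hπ T ∅
  simpa [AS_empty, Finset.empty_sdiff] using h

lemma scalar_id {β γ a : ℝ} (h1 : β + γ = 1) (h2 : β + γ * a = 1 / 2)
    (S T' : Finset ℤ) :
    ∑ T ∈ S.powerset, β ^ (S \ T).card * γ ^ T.card * a ^ (T ∪ T').card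
      = a ^ T'.card * (1 / 2 : ℝ) ^ (S \ T').card := by
  classical
  set d : ℤ → ℝ := fun n => if n ∈ T' then 1 else a with hd
  have hprodd : ∀ T : Finset ℤ, ∏ n ∈ T, d n = a ^ (T \ T').card := by
    intro T
    rw [hd]
    rw [Finset.prod_ite (fun _ => (1 : ℝ)) (fun _ => a), Finset.prod_const,
      Finset.prod_const, one_pow, one_mul, ← Finset.sdiff_eq_filter]
  have hcard : ∀ T : Finset ℤ, a ^ (T ∪ T').card = a ^ T'.card * ∏ n ∈ T, d n := by
    intro T
    have hu : T ∪ T' = T' ∪ (T \ T') := by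
      rw [Finset.union_sdiff_self_eq_union, Finset.union_comm]
    rw [hu, Finset.card_union_of_disjoint Finset.disjoint_sdiff, pow_add, hprodd]
  have hterm : ∀ T ∈ S.powerset, β ^ (S \ T).card * γ ^ T.card * a ^ (T ∪ T').card
      = a ^ T'.card * ((∏ n ∈ T, (γ * d n)) * ∏ n ∈ S \ T, β) := by
    intro T _
    rw [hcard T, Finset.prod_mul_distrib, Finset.prod_const, Finset.prod_const]
    ring
  rw [Finset.sum_congr rfl hterm, ← Finset.mul_sum, ← Finset.prod_add]
  congr 1
  have hpt : ∀ n ∈ S, γ * d n + β = if n ∈ T' then (1 : ℝ) else 1 / 2 := by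
    intro n _
    by_cases hn : n ∈ T'
    · rw [hd]; simp only []; rw [if_pos hn, if_pos hn]; linarith
    · rw [hd]; simp only []; rw [if_neg hn, if_neg hn]; linarith
  rw [Finset.prod_congr rfl hpt, Finset.prod_ite (fun _ => (1 : ℝ)) (fun _ => (1 / 2 : ℝ)),
    Finset.prod_const, Finset.prod_const, one_pow, one_mul, ← Finset.sdiff_eq_filter]

lemma condexp_indicator_eq {a β γ : ℝ} (ha0 : 0 < a) (ha2 : a ≤ 1 / 2)
    (hb1 : β + γ = 1) (hb2 : β + γ * a = 1 / 2) {π : Measure (ℤ → ℝ)}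
    [IsProbabilityMeasure π] (hπ : IsProductMeasure π μ01)
    (hm : coordAlg a ≤ (inferInstance : MeasurableSpace (ℤ → ℝ))) (S : Finset ℤ) :
    π[(AS (1 / 2) S).indicator (fun _ => (1 : ℝ)) | coordAlg a] =ᵐ[π]
      fun x => ∑ T ∈ S.powerset, β ^ (S \ T).card * γ ^ T.card *
        (AS a T).indicator (fun _ => (1 : ℝ)) x := by
  classical
  set h : (ℤ → ℝ) → ℝ := fun x => ∑ T ∈ S.powerset, β ^ (S \ T).card * γ ^ T.card *
    (AS a T).indicator (fun _ => (1 : ℝ)) x with hh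
  have hu_int : Integrable ((AS (1 / 2) S).indicator fun _ => (1 : ℝ)) π :=
    (integrable_const 1).indicator (measurableSet_AS' _ _)
  have hh_meas : StronglyMeasurable[coordAlg a] h := by
    apply Finset.stronglyMeasurable_fun_sum
    intro T _
    exact (stronglyMeasurable_const.indicator (measurableSet_AS a T)).const_mul _
  have hh_int : Integrable h π := by
    apply integrable_finset_sum
    intro T _
    exact ((integrable_const (1 : ℝ)).indicator (measurableSet_AS' a T)).const_mul _
  refine (ae_eq_condExp_of_forall_setIntegral_eq hm hu_int
    (fun s _ _ => hh_int.integrableOn) ?_ hh_meas.aestronglyMeasurable).symm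
  intro s hs _
  refine setIntegral_eq_on_subalg (isPiSystem_AS a) ⟨∅, (AS_empty a).symm⟩ (coordAlg_eq a)
    hm hh_int hu_int ?_ s hs
  rintro t ⟨T', rfl⟩
  have hL : ∫ x in AS a T', h x ∂π
      = ∑ T ∈ S.powerset, β ^ (S \ T).card * γ ^ T.card * a ^ (T ∪ T').card := by
    rw [hh]
    rw [integral_finset_sum _ (fun T _ =>
      (((integrable_const (1 : ℝ)).indicator (measurableSet_AS' a T)).const_mul
        _).integrableOn)]
    refine Finset.sum_congr rfl fun T _ => ?_
    rw [integral_const_mul, setIntegral_indicator_one (measurableSet_AS' a T),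
      AS_inter, measure_AS ha0.le ha2 hπ, ENNReal.toReal_ofReal (by positivity)]
  have hR : ∫ x in AS a T', (AS (1 / 2) S).indicator (fun _ => (1 : ℝ)) x ∂π
      = a ^ T'.card * (1 / 2 : ℝ) ^ (S \ T').card := by
    rw [setIntegral_indicator_one (measurableSet_AS' _ _), Set.inter_comm,
      measure_AS_inter ha0.le ha2 hπ, ENNReal.toReal_ofReal (by positivity)]
  rw [hL, hR, scalar_id hb1 hb2 S T']

end ShiftCondexpAux

open ShiftCondexpAux

/-- Fix `0 < a < 1/2` and let `π = μ^⊗ℤ` be the product of Lebesgue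
measure on `[0,1]`, preserved by the shift `S`. With `𝒜 = coordAlg a` and
`ℬ = coordAlg (1/2)` the sub-σ-algebras generated by the coordinate sets
`{x : x n ∈ [0,a]}` resp. `{x : x n ∈ [0,1/2]}`, the operator `W : L²(𝒜) → L²(ℬ)`
obtained by restricting the conditional expectation onto `ℬ` to `L²(𝒜)` is injective. -/
theorem shift_condexp_injective (a : ℝ) (ha0 : 0 < a) (ha1 : a < 1 / 2)
    (π : Measure (ℤ → ℝ)) [IsProbabilityMeasure π] (hπ : IsProductMeasure π μ01)
    (hS : MeasurePreserving (shiftZ (α := ℝ)) π π)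
    (hSinv : MeasurePreserving (shiftZinv (α := ℝ)) π π)
    [hA : Fact (coordAlg a ≤ (inferInstance : MeasurableSpace (ℤ → ℝ)))]
    [hB : Fact (coordAlg (1 / 2) ≤ (inferInstance : MeasurableSpace (ℤ → ℝ)))] :
    Function.Injective (condexpW (coordAlg a) (coordAlg (1 / 2)) π hB.out) := by
  classical
  have ha2 : a < 1 := lt_trans ha1 (by norm_num)
  have hane : (0:ℝ) < 1 - a := by linarith
  set β : ℝ := (1 / 2 - a) / (1 - a) with hβ
  set γ : ℝ := (1 / 2) / (1 - a) with hγ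
  have hb1 : β + γ = 1 := by
    rw [hβ, hγ, ← add_div, div_eq_one_iff_eq (ne_of_gt hane)]; ring
  have hb2 : β + γ * a = 1 / 2 := by
    rw [hβ, hγ]; field_simp; ring
  have hγpos : 0 < γ := by
    rw [hγ]; positivity
  rw [injective_iff_map_eq_zero]
  intro f hf
  set F : (ℤ → ℝ) → ℝ := ((f : Lp ℝ 2 π) : (ℤ → ℝ) → ℝ) with hFdef
  have hF_meas : AEStronglyMeasurable[coordAlg a] F π := lpMeas.aestronglyMeasurable f
  have hF_int : Integrable F π := (Lp.memLp (f : Lp ℝ 2 π)).integrable (by norm_num)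
  have hASm' : ∀ T : Finset ℤ, MeasurableSet (AS a T) := fun T => measurableSet_AS' a T
  -- the conditional expectation of f onto ℬ vanishes
  have hcondW : condExpL2 ℝ ℝ hB.out (f : Lp ℝ 2 π) = 0 := hf
  have hBzero : ∀ S : Finset ℤ, ∫ x in AS (1 / 2) S, F x ∂π = 0 := by
    intro S
    have hBmeas : MeasurableSet[coordAlg (1 / 2)] (AS (1 / 2) S) := measurableSet_AS _ _
    have hzero : ((condExpL2 ℝ ℝ hB.out (f : Lp ℝ 2 π) : Lp ℝ 2 π) : (ℤ → ℝ) → ℝ)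
        =ᵐ[π] 0 := by
      rw [hcondW]
      simp only [Submodule.coe_zero]
      exact Lp.coeFn_zero ℝ 2 π
    have h1 := integral_condExpL2_eq (𝕜 := ℝ) hB.out (f : Lp ℝ 2 π) hBmeas
      (measure_ne_top π _)
    rw [← h1]
    exact integral_eq_zero_of_ae (ae_restrict_of_ae hzero)
  -- key expansion
  have hkey : ∀ S : Finset ℤ, ∫ x in AS (1 / 2) S, F x ∂π
      = ∑ T ∈ S.powerset, β ^ (S \ T).card * γ ^ T.card * ∫ x in AS a T, F x ∂π := by
    intro S
    set u : (ℤ → ℝ) → ℝ := (AS (1 / 2) S).indicator (fun _ => (1 : ℝ)) with hu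
    have hBSm' : MeasurableSet (AS (1 / 2) S) := measurableSet_AS' _ _
    have hu_int : Integrable u π := (integrable_const 1).indicator hBSm'
    have hFu_int : Integrable (F * u) π := by
      have h2 : Integrable (fun x => u x * F x) π :=
        hF_int.bdd_mul hu_int.aestronglyMeasurable (c := 1) (Filter.Eventually.of_forall fun x => by
          rw [hu]
          by_cases hx : x ∈ AS (1 / 2) S
          · rw [Set.indicator_of_mem hx]; norm_num
          · rw [Set.indicator_of_notMem hx]; norm_num)
      exact h2.congr (Filter.Eventually.of_forall fun x => mul_comm _ _)
    have step1 : ∫ x in AS (1 / 2) S, F x ∂π = ∫ x, (F * u) x ∂π := by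
      rw [← integral_indicator hBSm']
      congr 1
      funext x
      rw [hu, Pi.mul_apply]
      by_cases hx : x ∈ AS (1 / 2) S
      · rw [Set.indicator_of_mem hx, Set.indicator_of_mem hx, mul_one]
      · rw [Set.indicator_of_notMem hx, Set.indicator_of_notMem hx, mul_zero]
    have step2 : ∫ x, (F * u) x ∂π = ∫ x, (F * π[u | coordAlg a]) x ∂π := by
      rw [← integral_condExp (μ := π) (f := F * u) hA.out]
      exact integral_congr_ae (condExp_mul_of_aestronglyMeasurable_left hF_meas hFu_int hu_int)
    have hcond := condexp_indicator_eq ha0 ha1.le hb1 hb2 hπ hA.out S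
    have step3 : ∫ x, (F * π[u | coordAlg a]) x ∂π
        = ∫ x, F x * (∑ T ∈ S.powerset, β ^ (S \ T).card * γ ^ T.card *
            (AS a T).indicator (fun _ => (1 : ℝ)) x) ∂π := by
      refine integral_congr_ae ?_
      filter_upwards [hcond] with x hx
      rw [Pi.mul_apply, hx]
    have step4 : ∫ x, F x * (∑ T ∈ S.powerset, β ^ (S \ T).card * γ ^ T.card *
            (AS a T).indicator (fun _ => (1 : ℝ)) x) ∂π
        = ∑ T ∈ S.powerset, β ^ (S \ T).card * γ ^ T.card * ∫ x in AS a T, F x ∂π := by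
      have hptw : ∀ x, F x * (∑ T ∈ S.powerset, β ^ (S \ T).card * γ ^ T.card *
            (AS a T).indicator (fun _ => (1 : ℝ)) x)
          = ∑ T ∈ S.powerset, β ^ (S \ T).card * γ ^ T.card *
              (AS a T).indicator F x := by
        intro x
        rw [Finset.mul_sum]
        refine Finset.sum_congr rfl fun T _ => ?_
        by_cases hx : x ∈ AS a T
        · rw [Set.indicator_of_mem hx, Set.indicator_of_mem hx]; ring
        · rw [Set.indicator_of_notMem hx, Set.indicator_of_notMem hx]; ring
      simp_rw [hptw]
      rw [integral_finset_sum _ (fun T _ => (hF_int.indicator (hASm' T)).const_mul _)]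
      refine Finset.sum_congr rfl fun T _ => ?_
      rw [integral_const_mul, integral_indicator (hASm' T)]
    rw [step1, step2, step3, step4]
  -- all A-cylinder integrals of F vanish
  have hc : ∀ T : Finset ℤ, ∫ x in AS a T, F x ∂π = 0 := by
    intro T
    induction T using Finset.strongInduction with
    | _ S ih =>
      have h := (hkey S).symm.trans (hBzero S)
      rw [← Finset.add_sum_erase _ _ (Finset.mem_powerset_self S)] at h
      have hz : ∀ T ∈ (S.powerset).erase S,
          β ^ (S \ T).card * γ ^ T.card * ∫ x in AS a T, F x ∂π = 0 := by
        intro T hT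
        have hTS : T ⊆ S := Finset.mem_powerset.mp (Finset.mem_of_mem_erase hT)
        have hne : T ≠ S := Finset.ne_of_mem_erase hT
        rw [ih T (lt_of_le_of_ne hTS hne), mul_zero]
      rw [Finset.sum_eq_zero hz, add_zero, Finset.sdiff_self, Finset.card_empty,
        pow_zero, one_mul] at h
      exact (mul_eq_zero.mp h).resolve_left (pow_ne_zero _ (ne_of_gt hγpos))
  -- hence all set integrals over the sub-σ-algebra vanish
  have hall : ∀ s : Set (ℤ → ℝ), MeasurableSet[coordAlg a] s → ∫ x in s, F x ∂π = 0 := by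
    intro s hs
    have h := setIntegral_eq_on_subalg (isPiSystem_AS a) ⟨∅, (AS_empty a).symm⟩
      (coordAlg_eq a) hA.out hF_int (integrable_zero _ _ π) ?_ s hs
    · simpa using h
    · rintro t ⟨T, rfl⟩
      simpa using hc T
  -- conclude F = 0 a.e.
  have h0cond : (fun _ => (0 : ℝ)) =ᵐ[π] π[F | coordAlg a] :=
    ae_eq_condExp_of_forall_setIntegral_eq hA.out hF_int
      (fun s _ _ => (integrable_zero _ _ π).integrableOn)
      (fun s hs _ => by simpa using (hall s hs).symm)
      (stronglyMeasurable_const.aestronglyMeasurable)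
  have hFcond : π[F | coordAlg a] =ᵐ[π] F :=
    condExp_of_aestronglyMeasurable' hA.out hF_meas hF_int
  have hF0 : F =ᵐ[π] 0 := hFcond.symm.trans (h0cond.symm)
  have hLp : (f : Lp ℝ 2 π) = 0 := by
    rw [Lp.eq_zero_iff_ae_eq_zero]
    exact hF0
  exact Subtype.ext hLp
end
end

section
/- Fix 0 < a < 1/2. Let μ be Lebesgue measure on [0,1], let S : [0,1]^ℤ → [0,1]^ℤ be the left shift preserving μ^⊗ℤ, let 𝒜 be the sub-σ-algebra of the product σ-algebra generated by the sets {x : x_n ∈ [0,a]}, n ∈ ℤ, and let ℬ be the sub-σ-algebra generated by the sets {x : x_n ∈ [0,1/2]}, n ∈ ℤ. Then the image under the conditional expectation E[·|ℬ] of the subspace L²(𝒜) is dense in L²(ℬ). -/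
open MeasureTheory
open scoped symmDiff

noncomputable section

namespace ShiftAux

/-- Cylinder sets. -/
def cyl (c : ℝ) (S : Finset ℤ) : Set (ℤ → ℝ) := {x | ∀ n ∈ S, x n ∈ Set.Icc 0 c}

lemma measurableSet_cyl (c : ℝ) (S : Finset ℤ) : MeasurableSet[coordAlg c] (cyl c S) := by
  have h : cyl c S = ⋂ n ∈ (S : Set ℤ), {x : ℤ → ℝ | x n ∈ Set.Icc 0 c} := by
    ext x; simp [cyl]
  rw [h]
  exact MeasurableSet.biInter S.countable_toSet fun n _ =>
    MeasurableSpace.measurableSet_generateFrom ⟨n, rfl⟩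

lemma μ01_Icc {c : ℝ} (h0 : 0 ≤ c) (h1 : c ≤ 1) : μ01 (Set.Icc 0 c) = ENNReal.ofReal c := by
  rw [μ01, Measure.restrict_apply measurableSet_Icc,
    Set.inter_eq_self_of_subset_left (Set.Icc_subset_Icc le_rfl h1), Real.volume_Icc]
  simp

lemma measure_cyl_inter {a : ℝ} (ha0 : 0 ≤ a) (ha1 : a ≤ 1 / 2) {π : Measure (ℤ → ℝ)}
    (hπ : IsProductMeasure π μ01) (S T : Finset ℤ) :
    π (cyl a S ∩ cyl (1 / 2) T) =
      ENNReal.ofReal a ^ S.card * ENNReal.ofReal (1 / 2) ^ (T \ S).card := by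
  classical
  set C : ℤ → Set ℝ := fun i => if i ∈ S then Set.Icc 0 a else Set.Icc 0 (1 / 2) with hC
  have hCm : ∀ i, MeasurableSet (C i) := fun i => by
    by_cases h : i ∈ S <;> simp [hC, h]
  have hset : cyl a S ∩ cyl (1 / 2) T = {x | ∀ i ∈ S ∪ T, x i ∈ C i} := by
    ext x
    simp only [cyl, Set.mem_inter_iff, Set.mem_setOf_eq, Finset.mem_union]
    constructor
    · rintro ⟨h1, h2⟩ i hi
      by_cases hiS : i ∈ S
      · simpa [hC, hiS] using h1 i hiS
      · rcases hi with hi | hi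
        · exact absurd hi hiS
        · simpa [hC, hiS] using h2 i hi
    · intro h
      refine ⟨fun i hi => by simpa [hC, hi] using h i (Or.inl hi), fun i hi => ?_⟩
      by_cases hiS : i ∈ S
      · have h2 := h i (Or.inl hiS)
        simp only [hC, if_pos hiS, Set.mem_Icc] at h2
        exact ⟨h2.1, h2.2.trans ha1⟩
      · simpa [hC, hiS] using h i (Or.inr hi)
  have ha1' : a ≤ 1 := ha1.trans (by norm_num)
  rw [hset, hπ (S ∪ T) C hCm, ← Finset.union_sdiff_self_eq_union,
    Finset.prod_union Finset.disjoint_sdiff]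
  congr 1
  · rw [Finset.prod_congr rfl fun i hi => by
      rw [show C i = Set.Icc 0 a by simp [hC, hi], μ01_Icc ha0 ha1']]
    simp
  · rw [Finset.prod_congr rfl fun i hi => by
      rw [show C i = Set.Icc 0 (1 / 2) by simp [hC, (Finset.mem_sdiff.mp hi).2],
        μ01_Icc (by norm_num) (by norm_num)]]
    simp

/-- The π-system of cylinder sets at level 1/2. -/
def cylSys : Set (Set (ℤ → ℝ)) := {s | ∃ T : Finset ℤ, s = cyl (1 / 2) T}

lemma isPiSystem_cylSys : IsPiSystem cylSys := by
  rintro s ⟨T1, rfl⟩ t ⟨T2, rfl⟩ -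
  refine ⟨T1 ∪ T2, ?_⟩
  ext x
  simp only [cyl, Set.mem_inter_iff, Set.mem_setOf_eq, Finset.mem_union]
  constructor
  · rintro ⟨h1, h2⟩ i (hi | hi)
    exacts [h1 i hi, h2 i hi]
  · intro h; exact ⟨fun i hi => h i (Or.inl hi), fun i hi => h i (Or.inr hi)⟩

lemma coordAlg_eq_generateFrom :
    coordAlg (1 / 2) = MeasurableSpace.generateFrom cylSys := by
  apply le_antisymm
  · apply MeasurableSpace.generateFrom_le
    rintro s ⟨n, rfl⟩
    refine MeasurableSpace.measurableSet_generateFrom ⟨{n}, ?_⟩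
    ext x; simp [cyl]
  · apply MeasurableSpace.generateFrom_le
    rintro s ⟨T, rfl⟩
    exact measurableSet_cyl _ _

lemma univ_eq_cyl : (Set.univ : Set (ℤ → ℝ)) = cyl (1 / 2) ∅ := by
  ext x; simp [cyl]

lemma cyl_inter_cyl (c : ℝ) (S T : Finset ℤ) :
    cyl c S ∩ cyl c T = cyl c (S ∪ T) := by
  ext x
  simp only [cyl, Set.mem_inter_iff, Set.mem_setOf_eq, Finset.mem_union]
  constructor
  · rintro ⟨h1, h2⟩ i (hi | hi)
    exacts [h1 i hi, h2 i hi]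
  · intro h; exact ⟨fun i hi => h i (Or.inl hi), fun i hi => h i (Or.inr hi)⟩

/-- Key value identity. -/
lemma value_eq {a : ℝ} (ha0 : 0 ≤ a) (ha1 : a ≤ 1 / 2) {π : Measure (ℤ → ℝ)}
    (hπ : IsProductMeasure π μ01) (S T : Finset ℤ) :
    π (cyl (1 / 2) T ∩ cyl a S) =
      ENNReal.ofReal (2 * a) ^ S.card * π (cyl (1 / 2) T ∩ cyl (1 / 2) S) := by
  rw [Set.inter_comm, measure_cyl_inter ha0 ha1 hπ S T, Set.inter_comm,
    measure_cyl_inter (by norm_num) le_rfl hπ S T]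
  have h : ENNReal.ofReal a = ENNReal.ofReal (2 * a) * ENNReal.ofReal (1 / 2) := by
    rw [← ENNReal.ofReal_mul (by linarith)]
    congr 1
    ring
  rw [h, mul_pow]
  ring

/-- The main measure identity, at the level of trimmed measures. -/
lemma trim_restrict_eq {a : ℝ} (ha0 : 0 ≤ a) (ha1 : a ≤ 1 / 2) (π : Measure (ℤ → ℝ))
    [IsProbabilityMeasure π] (hπ : IsProductMeasure π μ01)
    (hB : coordAlg (1 / 2) ≤ (inferInstance : MeasurableSpace (ℤ → ℝ))) (S : Finset ℤ) :
    (π.restrict (cyl a S)).trim hB =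
      ENNReal.ofReal (2 * a) ^ S.card • (π.restrict (cyl (1 / 2) S)).trim hB := by
  have key : ∀ T : Finset ℤ,
      ((π.restrict (cyl a S)).trim hB) (cyl (1 / 2) T) =
        (ENNReal.ofReal (2 * a) ^ S.card •
          (π.restrict (cyl (1 / 2) S)).trim hB) (cyl (1 / 2) T) := by
    intro T
    have hTm : MeasurableSet[coordAlg (1 / 2)] (cyl (1 / 2) T) := measurableSet_cyl _ _
    rw [trim_measurableSet_eq hB hTm, Measure.smul_apply, trim_measurableSet_eq hB hTm,
      Measure.restrict_apply (hB _ hTm), Measure.restrict_apply (hB _ hTm), smul_eq_mul]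
    exact value_eq ha0 ha1 hπ S T
  refine ext_of_generate_finite cylSys coordAlg_eq_generateFrom isPiSystem_cylSys ?_ ?_
  · rintro s ⟨T, rfl⟩
    exact key T
  · rw [univ_eq_cyl]
    exact key ∅

end ShiftAux

open ShiftAux
open scoped RealInnerProductSpace

/-- Fix `0 < a < 1/2` and let `π = μ^⊗ℤ` be the product of Lebesgue
measure on `[0,1]`, preserved by the shift `S`. With `𝒜 = coordAlg a` and
`ℬ = coordAlg (1/2)` the sub-σ-algebras generated by the coordinate sets
`{x : x n ∈ [0,a]}` resp. `{x : x n ∈ [0,1/2]}`, the image of `L²(𝒜)` under the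
conditional expectation `E[·|ℬ]` is dense in `L²(ℬ)`. -/
theorem shift_condexp_denseRange (a : ℝ) (ha0 : 0 < a) (ha1 : a < 1 / 2)
    (π : Measure (ℤ → ℝ)) [IsProbabilityMeasure π] (hπ : IsProductMeasure π μ01)
    (hS : MeasurePreserving (shiftZ (α := ℝ)) π π)
    (hSinv : MeasurePreserving (shiftZinv (α := ℝ)) π π)
    [hA : Fact (coordAlg a ≤ (inferInstance : MeasurableSpace (ℤ → ℝ)))]
    [hB : Fact (coordAlg (1 / 2) ≤ (inferInstance : MeasurableSpace (ℤ → ℝ)))] :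
    DenseRange (condexpW (coordAlg a) (coordAlg (1 / 2)) π hB.out) := by
  classical
  set W := condexpW (coordAlg a) (coordAlg (1 / 2)) π hB.out with hW
  set K : Submodule ℝ (lpMeas ℝ ℝ (coordAlg (1 / 2)) 2 π) := LinearMap.range (W : lpMeas ℝ ℝ (coordAlg a) 2 π →ₗ[ℝ] lpMeas ℝ ℝ (coordAlg (1 / 2)) 2 π) with hK
  have hrange : Set.range W = (K : Set (lpMeas ℝ ℝ (coordAlg (1 / 2)) 2 π)) := by
    ext y
    simp [hK, LinearMap.mem_range]
  rw [DenseRange, hrange, Submodule.dense_iff_topologicalClosure_eq_top,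
    Submodule.topologicalClosure_eq_top_iff, Submodule.eq_bot_iff]
  intro g hg
  -- the hypothesis: inner products with images vanish
  have horth : ∀ f : lpMeas ℝ ℝ (coordAlg a) 2 π, ⟪((f : Lp ℝ 2 π) : Lp ℝ 2 π), (g : Lp ℝ 2 π)⟫ = 0 := by
    intro f
    have h1 := (Submodule.mem_orthogonal K g).mp hg (W f) ⟨f, rfl⟩
    have h2 : ⟪((W f : lpMeas ℝ ℝ (coordAlg (1 / 2)) 2 π) : Lp ℝ 2 π), (g : Lp ℝ 2 π)⟫ = 0 := h1
    rw [show ((W f : lpMeas ℝ ℝ (coordAlg (1 / 2)) 2 π) : Lp ℝ 2 π)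
        = (condExpL2 ℝ ℝ hB.out (f : Lp ℝ 2 π) : Lp ℝ 2 π) from rfl] at h2
    rwa [inner_condExpL2_eq_inner_fun hB.out (f : Lp ℝ 2 π) (g : Lp ℝ 2 π)
      (lpMeas.aestronglyMeasurable g)] at h2
  -- a strongly measurable representative of g
  have hgm : AEStronglyMeasurable[coordAlg (1 / 2)] ((g : Lp ℝ 2 π) : (ℤ → ℝ) → ℝ) π :=
    lpMeas.aestronglyMeasurable g
  set g' : (ℤ → ℝ) → ℝ := hgm.mk _ with hg'
  have hg'meas : StronglyMeasurable[coordAlg (1 / 2)] g' := hgm.stronglyMeasurable_mk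
  have hgg' : ((g : Lp ℝ 2 π) : (ℤ → ℝ) → ℝ) =ᵐ[π] g' := hgm.ae_eq_mk
  -- integrability
  have hgint : Integrable ((g : Lp ℝ 2 π) : (ℤ → ℝ) → ℝ) π :=
    (Lp.memLp (g : Lp ℝ 2 π)).integrable (by norm_num)
  have hg'int : Integrable g' π := hgint.congr hgg'
  have hg'intν : Integrable g' (π.trim hB.out) := hg'int.trim hB.out hg'meas
  -- Step A : integrals over A-cylinders vanish
  have hstepA : ∀ S : Finset ℤ, ∫ x in cyl a S, g' x ∂π = 0 := by
    intro S
    have hmem : indicatorConstLp 2 (hA.out _ (measurableSet_cyl a S)) (measure_ne_top π _)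
        (1 : ℝ) ∈ lpMeas ℝ ℝ (coordAlg a) 2 π :=
      mem_lpMeas_indicatorConstLp hA.out (measurableSet_cyl a S) (measure_ne_top π _)
    have h1 := horth ⟨_, hmem⟩
    rw [L2.inner_indicatorConstLp_one (hA.out _ (measurableSet_cyl a S))
      (measure_ne_top π _) (g : Lp ℝ 2 π)] at h1
    calc ∫ x in cyl a S, g' x ∂π
        = ∫ x in cyl a S, ((g : Lp ℝ 2 π) : (ℤ → ℝ) → ℝ) x ∂π :=
          integral_congr_ae (ae_restrict_of_ae hgg'.symm)
      _ = 0 := h1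
  -- Step B : transfer to B-cylinders
  have hstepB : ∀ S : Finset ℤ, ∫ x in cyl (1 / 2) S, g' x ∂π = 0 := by
    intro S
    have h1 : ∫ x in cyl a S, g' x ∂π
        = ∫ x, g' x ∂((π.restrict (cyl a S)).trim hB.out) :=
      integral_trim hB.out hg'meas
    rw [trim_restrict_eq ha0.le ha1.le π hπ hB.out S, integral_smul_measure,
      ← integral_trim hB.out hg'meas] at h1
    have htr : (ENNReal.ofReal (2 * a) ^ S.card).toReal = (2 * a) ^ S.card := by
      rw [ENNReal.toReal_pow, ENNReal.toReal_ofReal (by linarith)]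
    rw [htr] at h1
    have hne : (2 * a) ^ S.card ≠ 0 := pow_ne_zero _ (by linarith)
    have h2 := hstepA S
    rw [h1, smul_eq_mul] at h2
    exact (mul_eq_zero.mp h2).resolve_left hne
  -- Step C : integrals over B-cylinders w.r.t. the trimmed measure vanish
  set ν := π.trim hB.out with hν
  have hstepC : ∀ S : Finset ℤ, ∫ x in cyl (1 / 2) S, g' x ∂ν = 0 := by
    intro S
    have hSm : MeasurableSet[coordAlg (1 / 2)] (cyl (1 / 2) S) := measurableSet_cyl _ _
    calc ∫ x in cyl (1 / 2) S, g' x ∂ν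
        = ∫ x, g' x ∂((π.restrict (cyl (1 / 2) S)).trim hB.out) := by
          rw [hν, restrict_trim hB.out π hSm]
      _ = ∫ x in cyl (1 / 2) S, g' x ∂π := (integral_trim hB.out hg'meas).symm
      _ = 0 := hstepB S
  -- Step D : all set integrals w.r.t. ν vanish
  set μp : @Measure (ℤ → ℝ) (coordAlg (1 / 2)) :=
    ν.withDensity (fun x => ENNReal.ofReal (g' x)) with hμp
  set μm : @Measure (ℤ → ℝ) (coordAlg (1 / 2)) :=
    ν.withDensity (fun x => ENNReal.ofReal (-g' x)) with hμm
  have hfin : ∀ f : (ℤ → ℝ) → ℝ, Integrable f ν →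
      IsFiniteMeasure (ν.withDensity (fun x => ENNReal.ofReal (f x))) := by
    intro f hf
    refine ⟨?_⟩
    rw [withDensity_apply _ MeasurableSet.univ, Measure.restrict_univ]
    calc ∫⁻ x, ENNReal.ofReal (f x) ∂ν ≤ ∫⁻ x, ‖f x‖ₑ ∂ν := by
          refine lintegral_mono fun x => ?_
          rw [Real.enorm_eq_ofReal_abs]
          exact ENNReal.ofReal_le_ofReal (le_abs_self _)
      _ < ⊤ := hf.2
  haveI hfp : IsFiniteMeasure μp := hfin _ hg'intν
  haveI hfm : IsFiniteMeasure μm := hfin _ (hg'intν.neg)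
  have hval : ∀ E : Set (ℤ → ℝ), MeasurableSet[coordAlg (1 / 2)] E →
      ∫ x in E, g' x ∂ν = (μp E).toReal - (μm E).toReal := by
    intro E hE
    rw [integral_eq_lintegral_pos_part_sub_lintegral_neg_part (hg'intν.restrict),
      hμp, hμm, withDensity_apply _ hE, withDensity_apply _ hE]
  have hμpm : μp = μm := by
    have hagree : ∀ s ∈ cylSys, μp s = μm s := by
      rintro s ⟨T, rfl⟩
      have hTm : MeasurableSet[coordAlg (1 / 2)] (cyl (1 / 2) T) := measurableSet_cyl _ _
      have h0 := hstepC T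
      rw [hval _ hTm, sub_eq_zero] at h0
      exact (ENNReal.toReal_eq_toReal_iff' (measure_ne_top μp _) (measure_ne_top μm _)).mp h0
    refine ext_of_generate_finite cylSys coordAlg_eq_generateFrom isPiSystem_cylSys hagree ?_
    rw [univ_eq_cyl]
    exact hagree _ ⟨∅, rfl⟩
  have hzero : ∀ E : Set (ℤ → ℝ), MeasurableSet[coordAlg (1 / 2)] E → ν E < ⊤ →
      ∫ x in E, g' x ∂ν = 0 := by
    intro E hE _
    rw [hval E hE, hμpm, sub_self]
  have hg'0 : g' =ᵐ[ν] 0 := hg'intν.ae_eq_zero_of_forall_setIntegral_eq_zero hzero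
  -- conclude
  have hg0 : ((g : Lp ℝ 2 π) : (ℤ → ℝ) → ℝ) =ᵐ[π] 0 :=
    hgg'.trans (ae_eq_of_ae_eq_trim hg'0)
  have : (g : Lp ℝ 2 π) = 0 := Lp.ext (hg0.trans (Lp.coeFn_zero ℝ 2 π).symm)
  exact Submodule.coe_eq_zero.mp this
end
end
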